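/- arXiv:math/0409131 — 8 statements merged into one kernel-verified Lean document; each statement's English description precedes it below -/
import Mathlib

section
/- Let M ⊂ ℂ^N be a bounded connected open set and let f : M → M be holomorphic. If f maps M strictly inside M, i.e. there exists ε > 0 such that the ε-neighbourhood of f(M) is contained in M, then f has a unique fixed point in M. -/
open Metric Set MeasureTheory ENNReal

noncomputable section
namespace EHproof
variable {N : ℕ}

instance euMS : MeasurableSpace (EuclideanSpace ℂ (Fin N)) := borel _
instance euBS : BorelSpace (EuclideanSpace ℂ (Fin N)) := ⟨rfl⟩

/-- The family of holomorphic maps from `M` to the unit disc in `ℂ`. -/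
def Fam (M : Set (EuclideanSpace ℂ (Fin N))) : Set (EuclideanSpace ℂ (Fin N) → ℂ) :=
  {g | DifferentiableOn ℂ g M ∧ Set.MapsTo g M (ball (0:ℂ) 1)}

/-- The infinitesimal Carathéodory pseudometric of `M`. -/
def gmet (M : Set (EuclideanSpace ℂ (Fin N))) (x v : EuclideanSpace ℂ (Fin N)) : ℝ≥0∞ :=
  ⨆ g ∈ Fam M, (‖fderiv ℂ g x v‖₊ : ℝ≥0∞)

/-- Directional Schwarz/Cauchy estimate. -/
theorem dirSchwarz {F' : Type*} [NormedAddCommGroup F'] [NormedSpace ℂ F']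
    {M : Set (EuclideanSpace ℂ (Fin N))} (hOpen : IsOpen M)
    {g : EuclideanSpace ℂ (Fin N) → F'} (hg : DifferentiableOn ℂ g M)
    {x : EuclideanSpace ℂ (Fin N)} {δ R : ℝ} (hδ : 0 < δ)
    (hball : ball x δ ⊆ M) (hx : x ∈ M)
    (hmaps : Set.MapsTo g M (ball (g x) R)) (v : EuclideanSpace ℂ (Fin N)) :
    ‖fderiv ℂ g x v‖ ≤ R / δ * ‖v‖ := by
  rcases eq_or_ne v 0 with rfl | hv
  · simp
  have hvn : (0:ℝ) < ‖v‖ := norm_pos_iff.2 hv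
  set u : EuclideanSpace ℂ (Fin N) := ((‖v‖:ℂ))⁻¹ • v with hu
  have hun : ‖u‖ = 1 := by
    rw [hu, norm_smul]
    simp [norm_inv, Complex.norm_real, abs_of_pos hvn, inv_mul_cancel₀ hvn.ne']
  set φ : ℂ → F' := fun ζ => g (x + ζ • u) with hφ
  have hmem : ∀ ζ : ℂ, ζ ∈ ball (0:ℂ) δ → x + ζ • u ∈ M := by
    intro ζ hζ
    apply hball
    simp only [mem_ball, dist_self_add_left, norm_smul, hun, mul_one]
    simpa [dist_eq_norm] using hζ
  have hφd : DifferentiableOn ℂ φ (ball (0:ℂ) δ) := by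
    intro ζ hζ
    have h1 : DifferentiableAt ℂ (fun ζ : ℂ => x + ζ • u) ζ :=
      (differentiableAt_id.smul_const u).const_add x
    exact ((hg.differentiableAt (hOpen.mem_nhds (hmem ζ hζ))).comp ζ h1).differentiableWithinAt
  have hφm : Set.MapsTo φ (ball (0:ℂ) δ) (ball (φ 0) R) := by
    intro ζ hζ
    have : φ 0 = g x := by simp [hφ]
    rw [this]
    exact hmaps (hmem ζ hζ)
  have hder : HasDerivAt φ (fderiv ℂ g x u) 0 := by
    have h1 : HasDerivAt (fun ζ : ℂ => x + ζ • u) u 0 := by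
      simpa using ((hasDerivAt_id (0:ℂ)).smul_const u).const_add x
    have h2 : HasFDerivAt g (fderiv ℂ g x) (x + (0:ℂ) • u) := by
      simpa using (hg.differentiableAt (hOpen.mem_nhds hx)).hasFDerivAt
    exact h2.comp_hasDerivAt (0:ℂ) h1
  have hSch : ‖deriv φ 0‖ ≤ R / δ :=
    Complex.norm_deriv_le_div_of_mapsTo_ball hφd (hφm.mono_right ball_subset_closedBall) hδ
  rw [hder.deriv] at hSch
  have hvd : fderiv ℂ g x v = (‖v‖:ℂ) • fderiv ℂ g x u := by
    rw [← ContinuousLinearMap.map_smul, hu, smul_smul]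
    rw [mul_inv_cancel₀ (by exact_mod_cast hvn.ne'), one_smul]
  rw [hvd, norm_smul]
  simp only [Complex.norm_real, Real.norm_eq_abs, abs_of_pos hvn]
  rw [mul_comm]
  exact mul_le_mul_of_nonneg_right hSch hvn.le

theorem gmet_le_of_ball {M : Set (EuclideanSpace ℂ (Fin N))} (hOpen : IsOpen M)
    {x : EuclideanSpace ℂ (Fin N)} {δ : ℝ} (hδ : 0 < δ) (hx : x ∈ M)
    (hball : ball x δ ⊆ M) (v : EuclideanSpace ℂ (Fin N)) :
    gmet M x v ≤ ENNReal.ofReal (2 / δ * ‖v‖) := by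
  refine iSup₂_le fun g hg => ?_
  rw [← enorm_eq_nnnorm, ← ofReal_norm]
  refine ENNReal.ofReal_le_ofReal ?_
  refine dirSchwarz hOpen hg.1 hδ hball hx ?_ v
  intro z hz
  have h1 : g z ∈ ball (0:ℂ) 1 := hg.2 hz
  have h2 : g x ∈ ball (0:ℂ) 1 := hg.2 hx
  simp only [mem_ball] at h1 h2 ⊢
  calc dist (g z) (g x) ≤ dist (g z) 0 + dist (g x) 0 := dist_triangle_right _ _ _
  _ < 1 + 1 := add_lt_add h1 h2
  _ = 2 := by norm_num

theorem gmet_ge {M : Set (EuclideanSpace ℂ (Fin N))} (hBdd : Bornology.IsBounded M)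
    {x : EuclideanSpace ℂ (Fin N)} (hx : x ∈ M) (v : EuclideanSpace ℂ (Fin N)) :
    ENNReal.ofReal ‖v‖ ≤ ENNReal.ofReal (Metric.diam M + 1) * gmet M x v := by
  rcases eq_or_ne v 0 with rfl | hv
  · simp
  have hvn : (0:ℝ) < ‖v‖ := norm_pos_iff.2 hv
  set D := Metric.diam M with hD
  have hD0 : 0 ≤ D := Metric.diam_nonneg
  set c : ℝ := (D + 1)⁻¹ * ‖v‖⁻¹ with hc
  have hc0 : 0 < c := by positivity
  set L : EuclideanSpace ℂ (Fin N) →L[ℂ] ℂ := innerSL ℂ v with hL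
  set g : EuclideanSpace ℂ (Fin N) → ℂ := fun z => (c:ℂ) • L (z - x) with hg
  have hgFam : g ∈ Fam M := by
    constructor
    · intro z _
      exact (((L.differentiable.comp (differentiable_id.sub_const x)) z).const_smul
        ((c:ℂ))).differentiableWithinAt
    · intro z hz
      simp only [hg, mem_ball, dist_zero_right, norm_smul, Complex.norm_real,
        Real.norm_eq_abs, abs_of_pos hc0]
      have h1 : ‖L (z - x)‖ ≤ ‖v‖ * ‖z - x‖ := by
        simpa [hL] using norm_inner_le_norm (𝕜 := ℂ) v (z - x)
      have h2 : ‖z - x‖ ≤ D := by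
        rw [← dist_eq_norm]
        exact Metric.dist_le_diam_of_mem hBdd hz hx
      calc c * ‖L (z - x)‖ ≤ c * (‖v‖ * D) := by
            refine mul_le_mul_of_nonneg_left ?_ hc0.le
            exact h1.trans (mul_le_mul_of_nonneg_left h2 (norm_nonneg v))
      _ = D / (D + 1) := by
            rw [hc]; field_simp
      _ < 1 := by
            rw [div_lt_one (by linarith)]; linarith
  have hfder : fderiv ℂ g x = (c:ℂ) • L := by
    have h1 : HasFDerivAt (fun z : EuclideanSpace ℂ (Fin N) => L (z - x)) L x := by
      have h2 : HasFDerivAt (fun z : EuclideanSpace ℂ (Fin N) => L z - L x) L x :=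
        L.hasFDerivAt.sub_const (L x)
      refine h2.congr_of_eventuallyEq (Filter.Eventually.of_forall fun z => ?_)
      simp [map_sub]
    exact (h1.const_smul ((c:ℂ))).fderiv
  have hval : ‖fderiv ℂ g x v‖ = ‖v‖ / (D + 1) := by
    rw [hfder]
    simp only [ContinuousLinearMap.smul_apply, norm_smul, Complex.norm_real,
      Real.norm_eq_abs, abs_of_pos hc0]
    have hLv : ‖L v‖ = ‖v‖ ^ 2 := by
      simp only [hL, innerSL_apply_apply]
      rw [inner_self_eq_norm_sq_to_K]
      simp [Complex.norm_real, sq_abs]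
    rw [hLv, hc]
    field_simp
  have hle : ENNReal.ofReal (‖v‖ / (D + 1)) ≤ gmet M x v := by
    rw [← hval, ofReal_norm, enorm_eq_nnnorm]
    exact le_iSup₂ (f := fun g _ => (‖fderiv ℂ g x v‖₊ : ℝ≥0∞)) g hgFam
  calc ENNReal.ofReal ‖v‖ = ENNReal.ofReal (D + 1) * ENNReal.ofReal (‖v‖ / (D + 1)) := by
        rw [← ENNReal.ofReal_mul (by linarith)]
        congr 1
        field_simp
  _ ≤ ENNReal.ofReal (D + 1) * gmet M x v := mul_le_mul_right hle _


theorem gmet_comp {M : Set (EuclideanSpace ℂ (Fin N))} (hOpen : IsOpen M)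
    {h : EuclideanSpace ℂ (Fin N) → EuclideanSpace ℂ (Fin N)}
    (hd : DifferentiableOn ℂ h M) (hm : Set.MapsTo h M M)
    {x : EuclideanSpace ℂ (Fin N)} (hx : x ∈ M) (v : EuclideanSpace ℂ (Fin N)) :
    gmet M (h x) (fderiv ℂ h x v) ≤ gmet M x v := by
  refine iSup₂_le fun g hg => ?_
  have hgh : (g ∘ h) ∈ Fam M := by
    constructor
    · exact hg.1.comp hd hm
    · exact hg.2.comp hm
  have hda : DifferentiableAt ℂ h x := hd.differentiableAt (hOpen.mem_nhds hx)
  have hga : DifferentiableAt ℂ g (h x) := hg.1.differentiableAt (hOpen.mem_nhds (hm hx))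
  have hch : fderiv ℂ (g ∘ h) x = (fderiv ℂ g (h x)).comp (fderiv ℂ h x) :=
    fderiv_comp x hga hda
  have : (‖fderiv ℂ g (h x) (fderiv ℂ h x v)‖₊ : ℝ≥0∞) = ‖fderiv ℂ (g ∘ h) x v‖₊ := by
    rw [hch]; rfl
  rw [this]
  exact le_iSup₂ (f := fun g _ => (‖fderiv ℂ g x v‖₊ : ℝ≥0∞)) (g ∘ h) hgh

theorem gmet_smul {M : Set (EuclideanSpace ℂ (Fin N))} (x : EuclideanSpace ℂ (Fin N))
    (c : ℂ) (v : EuclideanSpace ℂ (Fin N)) :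
    gmet M x (c • v) = (‖c‖₊ : ℝ≥0∞) * gmet M x v := by
  unfold gmet
  rw [ENNReal.mul_iSup]
  refine iSup_congr fun g => ?_
  rw [ENNReal.mul_iSup]
  refine iSup_congr fun _ => ?_
  rw [ContinuousLinearMap.map_smul, nnnorm_smul]
  push_cast
  ring

/-- The key Earle–Hamilton dilation estimate. -/
theorem gmet_contract {M : Set (EuclideanSpace ℂ (Fin N))} (hOpen : IsOpen M)
    (hBdd : Bornology.IsBounded M)
    {f : EuclideanSpace ℂ (Fin N) → EuclideanSpace ℂ (Fin N)}
    (hMaps : Set.MapsTo f M M) (hHol : DifferentiableOn ℂ f M)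
    {ε : ℝ} (hε : 0 < ε) (hsub : Metric.thickening ε (f '' M) ⊆ M)
    {x : EuclideanSpace ℂ (Fin N)} (hx : x ∈ M) (v : EuclideanSpace ℂ (Fin N)) :
    ENNReal.ofReal (1 + ε / (2 * (Metric.diam M + 1))) *
      gmet M (f x) (fderiv ℂ f x v) ≤ gmet M x v := by
  set D := Metric.diam M with hDdef
  have hD0 : 0 ≤ D := Metric.diam_nonneg
  set τ : ℝ := ε / (2 * (D + 1)) with hτdef
  have hτ0 : 0 < τ := by positivity
  set F : EuclideanSpace ℂ (Fin N) → EuclideanSpace ℂ (Fin N) :=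
    fun z => f z + (τ:ℂ) • (f z - f x) with hF
  have hFd : DifferentiableOn ℂ F M := by
    intro z hz
    exact (hHol z hz).add (((hHol z hz).sub_const (f x)).const_smul ((τ:ℂ)))
  have hFm : Set.MapsTo F M M := by
    intro z hz
    apply hsub
    rw [Metric.mem_thickening_iff]
    refine ⟨f z, ⟨z, hz, rfl⟩, ?_⟩
    rw [dist_eq_norm]
    have h1 : F z - f z = (τ:ℂ) • (f z - f x) := by
      simp only [hF]
      module
    rw [h1, norm_smul]
    simp only [Complex.norm_real, Real.norm_eq_abs, abs_of_pos hτ0]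
    have h2 : ‖f z - f x‖ ≤ D := by
      rw [← dist_eq_norm]
      exact Metric.dist_le_diam_of_mem hBdd (hMaps hz) (hMaps hx)
    calc τ * ‖f z - f x‖ ≤ τ * D := mul_le_mul_of_nonneg_left h2 hτ0.le
    _ < ε := by
        rw [hτdef]
        rw [div_mul_eq_mul_div, div_lt_iff₀ (by positivity)]
        nlinarith
  have hFx : F x = f x := by simp [hF]
  have hfa : DifferentiableAt ℂ f x := hHol.differentiableAt (hOpen.mem_nhds hx)
  have hFder : HasFDerivAt F (((1:ℂ) + τ) • fderiv ℂ f x) x := by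
    have h1 : HasFDerivAt f (fderiv ℂ f x) x := hfa.hasFDerivAt
    have h2 : HasFDerivAt F (fderiv ℂ f x + (τ:ℂ) • fderiv ℂ f x) x := by
      have h3 := h1.add (((h1.sub_const (f x))).const_smul ((τ:ℂ)))
      exact h3
    convert h2 using 1
    ext w; simp [add_smul]
  have hFv : fderiv ℂ F x v = ((1:ℂ) + τ) • fderiv ℂ f x v := by
    rw [hFder.fderiv]; rfl
  have hkey : gmet M (F x) (fderiv ℂ F x v) ≤ gmet M x v :=
    gmet_comp hOpen hFd hFm hx v
  rw [hFx, hFv, gmet_smul] at hkey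
  have hnrm : (‖(1:ℂ) + τ‖₊ : ℝ≥0∞) = ENNReal.ofReal (1 + τ) := by
    have : ((1:ℂ) + τ) = ((1 + τ : ℝ) : ℂ) := by push_cast; ring
    rw [this, ← enorm_eq_nnnorm, ← ofReal_norm]
    congr 1
    rw [Complex.norm_real, Real.norm_eq_abs, abs_of_pos (by linarith)]
  rw [hnrm] at hkey
  exact hkey


/-- A C¹ path in `M` (with globally continuous parametrization, measurable bounded
derivative, and vanishing derivative at the endpoints). -/
structure Path (M : Set (EuclideanSpace ℂ (Fin N))) (a b : EuclideanSpace ℂ (Fin N)) where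
  γ : ℝ → EuclideanSpace ℂ (Fin N)
  γ' : ℝ → EuclideanSpace ℂ (Fin N)
  cont : Continuous γ
  meas : Measurable γ'
  maps : ∀ t ∈ Icc (0:ℝ) 1, γ t ∈ M
  hderiv : ∀ t ∈ Icc (0:ℝ) 1, HasDerivWithinAt γ (γ' t) (Icc 0 1) t
  bdd : ∃ C, ∀ t ∈ Icc (0:ℝ) 1, ‖γ' t‖ ≤ C
  d0 : γ' 0 = 0
  d1 : γ' 1 = 0
  ep0 : γ 0 = a
  ep1 : γ 1 = b

variable {M : Set (EuclideanSpace ℂ (Fin N))} {a b c : EuclideanSpace ℂ (Fin N)}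

def cost (p : Path M a b) : ℝ≥0∞ := ∫⁻ t in Icc (0:ℝ) 1, gmet M (p.γ t) (p.γ' t)

theorem Path.exists_ball (hOpen : IsOpen M) (p : Path M a b) :
    ∃ δ > (0:ℝ), ∀ t ∈ Icc (0:ℝ) 1, ball (p.γ t) δ ⊆ M := by
  have hK : IsCompact (p.γ '' Icc (0:ℝ) 1) :=
    (isCompact_Icc).image p.cont
  have hKM : p.γ '' Icc (0:ℝ) 1 ⊆ M := by
    rintro _ ⟨t, ht, rfl⟩; exact p.maps t ht
  obtain ⟨δ, hδ, hsub⟩ := hK.exists_thickening_subset_open hOpen hKM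
  refine ⟨δ, hδ, fun t ht y hy => ?_⟩
  apply hsub
  rw [Metric.mem_thickening_iff]
  exact ⟨p.γ t, ⟨t, ht, rfl⟩, hy⟩

theorem cost_lt_top (hOpen : IsOpen M) (p : Path M a b) : cost p < ⊤ := by
  obtain ⟨δ, hδ, hball⟩ := p.exists_ball hOpen
  obtain ⟨C, hC⟩ := p.bdd
  have hb : ∀ t ∈ Icc (0:ℝ) 1, gmet M (p.γ t) (p.γ' t) ≤ ENNReal.ofReal (2/δ * C) := by
    intro t ht
    refine (gmet_le_of_ball hOpen hδ (p.maps t ht) (hball t ht) _).trans ?_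
    refine ENNReal.ofReal_le_ofReal ?_
    have : (0:ℝ) ≤ 2/δ := by positivity
    exact mul_le_mul_of_nonneg_left (hC t ht) this
  calc cost p ≤ ∫⁻ _ in Icc (0:ℝ) 1, ENNReal.ofReal (2/δ * C) := by
        refine lintegral_mono_ae ?_
        filter_upwards [ae_restrict_mem measurableSet_Icc] with t ht
        exact hb t ht
  _ = ENNReal.ofReal (2/δ * C) * volume (Icc (0:ℝ) 1) := setLIntegral_const _ _
  _ < ⊤ := by
        apply ENNReal.mul_lt_top ofReal_lt_top
        simp [Real.volume_Icc]

theorem Path.lower (hBdd : Bornology.IsBounded M) (p : Path M a b) :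
    ENNReal.ofReal ‖b - a‖ ≤ ENNReal.ofReal (Metric.diam M + 1) * cost p := by
  -- integrability of ‖γ'‖ on Icc 0 1
  obtain ⟨C, hC⟩ := p.bdd
  have hmeas : AEStronglyMeasurable p.γ' (volume.restrict (Icc (0:ℝ) 1)) :=
    p.meas.aestronglyMeasurable
  have hint : IntegrableOn p.γ' (Icc (0:ℝ) 1) volume := by
    refine ⟨hmeas, ?_⟩
    refine HasFiniteIntegral.restrict_of_bounded (C := max C 0) (by simp [Real.volume_Icc]) ?_
    filter_upwards [ae_restrict_mem measurableSet_Icc] with t ht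
    exact (hC t ht).trans (le_max_left _ _)
  -- FTC: ∫ γ' over [0,1] = b - a
  have hIoc : IntegrableOn p.γ' (Ioc (0:ℝ) 1) volume := hint.mono_set Ioc_subset_Icc_self
  have hII : IntervalIntegrable p.γ' volume 0 1 := by
    rw [intervalIntegrable_iff_integrableOn_Ioc_of_le zero_le_one]; exact hIoc
  have hcont : ContinuousOn p.γ (Icc (0:ℝ) 1) := p.cont.continuousOn
  have hftc : ∫ t in (0:ℝ)..1, p.γ' t = p.γ 1 - p.γ 0 := by
    refine intervalIntegral.integral_eq_sub_of_hasDeriv_right_of_le zero_le_one hcont ?_ hII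
    intro t ht
    have h1 : HasDerivWithinAt p.γ (p.γ' t) (Icc 0 1) t := p.hderiv t (Ioo_subset_Icc_self ht)
    have h2 : HasDerivAt p.γ (p.γ' t) t :=
      h1.hasDerivAt (Icc_mem_nhds ht.1 ht.2)
    exact h2.hasDerivWithinAt
  have hnorm : ‖b - a‖ ≤ ∫ t in (0:ℝ)..1, ‖p.γ' t‖ := by
    have hba : b - a = ∫ t in (0:ℝ)..1, p.γ' t := by rw [hftc, p.ep0, p.ep1]
    rw [hba]
    exact intervalIntegral.norm_integral_le_integral_norm zero_le_one
  -- pass to lintegral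
  have hlin : ENNReal.ofReal (∫ t in (0:ℝ)..1, ‖p.γ' t‖)
      ≤ ∫⁻ t in Icc (0:ℝ) 1, (‖p.γ' t‖₊ : ℝ≥0∞) := by
    rw [intervalIntegral.integral_of_le zero_le_one,
      ← MeasureTheory.integral_Icc_eq_integral_Ioc]
    rw [ofReal_integral_eq_lintegral_ofReal hint.norm
      (Filter.Eventually.of_forall fun t => norm_nonneg _)]
    refine lintegral_mono fun t => ?_
    rw [ofReal_norm, enorm_eq_nnnorm]
  have hgm : ∫⁻ t in Icc (0:ℝ) 1, (‖p.γ' t‖₊ : ℝ≥0∞)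
      ≤ ENNReal.ofReal (Metric.diam M + 1) * cost p := by
    unfold cost
    rw [← lintegral_const_mul' _ _ ofReal_ne_top]
    refine lintegral_mono_ae ?_
    filter_upwards [ae_restrict_mem measurableSet_Icc] with t ht
    rw [← enorm_eq_nnnorm, ← ofReal_norm]
    exact gmet_ge hBdd (p.maps t ht) _
  calc ENNReal.ofReal ‖b - a‖ ≤ ENNReal.ofReal (∫ t in (0:ℝ)..1, ‖p.γ' t‖) :=
        ENNReal.ofReal_le_ofReal hnorm
  _ ≤ _ := hlin.trans hgm


/-- clamp to [0,1] -/
def clmp (t : ℝ) : ℝ := max 0 (min 1 t)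

theorem clmp_cont : Continuous clmp := continuous_const.max (continuous_const.min continuous_id)

theorem clmp_mem (t : ℝ) : clmp t ∈ Icc (0:ℝ) 1 :=
  ⟨le_max_left _ _, max_le (by norm_num) (min_le_left _ _)⟩

theorem clmp_eq {t : ℝ} (ht : t ∈ Icc (0:ℝ) 1) : clmp t = t := by
  have h1 : min 1 t = t := min_eq_right ht.2
  rw [clmp, h1, max_eq_right ht.1]

/-- The image of a path under a holomorphic self-map of `M`. -/
def Path.map (hOpen : IsOpen M) (hBdd : Bornology.IsBounded M)
    {f : EuclideanSpace ℂ (Fin N) → EuclideanSpace ℂ (Fin N)}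
    (hMaps : Set.MapsTo f M M) (hHol : DifferentiableOn ℂ f M)
    (p : Path M a b) : Path M (f a) (f b) where
  γ := fun t => f (p.γ (clmp t))
  γ' := fun t => fderiv ℂ f (p.γ (clmp t)) (p.γ' (clmp t))
  cont := by
    refine hHol.continuousOn.comp_continuous (p.cont.comp clmp_cont) fun t => ?_
    exact p.maps _ (clmp_mem t)
  meas := by
    have hA : Measurable fun t => fderiv ℂ f (p.γ (clmp t)) :=
      (measurable_fderiv ℂ f).comp (p.cont.comp clmp_cont).measurable
    have hv : Measurable fun t => p.γ' (clmp t) := p.meas.comp clmp_cont.measurable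
    exact isBoundedBilinearMap_apply.continuous.measurable.comp (hA.prodMk hv)
  maps := fun t ht => hMaps (p.maps _ (clmp_mem t))
  hderiv := by
    intro t ht
    have hct : clmp t = t := clmp_eq ht
    have hd : HasDerivWithinAt (fun s => f (p.γ s))
        (fderiv ℂ f (p.γ t) (p.γ' t)) (Icc 0 1) t := by
      have hfa : DifferentiableAt ℂ f (p.γ t) :=
        hHol.differentiableAt (hOpen.mem_nhds (p.maps t ht))
      have h2 := (hfa.hasFDerivAt.restrictScalars ℝ).comp_hasDerivWithinAt (x := t)
        (p.hderiv t ht)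
      exact h2
    have hgoal : HasDerivWithinAt (fun s => f (p.γ (clmp s)))
        (fderiv ℂ f (p.γ (clmp t)) (p.γ' (clmp t))) (Icc 0 1) t := by
      rw [hct]
      exact hd.congr (fun s hs => by rw [clmp_eq hs]) (by rw [hct])
    exact hgoal
  bdd := by
    obtain ⟨δ, hδ, hball⟩ := p.exists_ball hOpen
    obtain ⟨C, hC⟩ := p.bdd
    refine ⟨(Metric.diam M + 1) / δ * C, fun t ht => ?_⟩
    have hct : clmp t = t := clmp_eq ht
    show ‖fderiv ℂ f (p.γ (clmp t)) (p.γ' (clmp t))‖ ≤ (Metric.diam M + 1) / δ * C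
    rw [hct]
    have hmapsf : Set.MapsTo f M (ball (f (p.γ t)) (Metric.diam M + 1)) := by
      intro z hz
      rw [mem_ball]
      calc dist (f z) (f (p.γ t)) ≤ Metric.diam M :=
            Metric.dist_le_diam_of_mem hBdd (hMaps hz) (hMaps (p.maps t ht))
      _ < Metric.diam M + 1 := by linarith
    have h1 := dirSchwarz hOpen hHol hδ (hball t ht) (p.maps t ht) hmapsf (p.γ' t)
    refine h1.trans ?_
    have hD : (0:ℝ) ≤ (Metric.diam M + 1) / δ := by positivity
    exact mul_le_mul_of_nonneg_left (hC t ht) hD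
  d0 := by
    show fderiv ℂ f (p.γ (clmp 0)) (p.γ' (clmp 0)) = 0
    have : clmp 0 = 0 := clmp_eq ⟨le_refl _, zero_le_one⟩
    rw [this, p.d0, ContinuousLinearMap.map_zero]
  d1 := by
    show fderiv ℂ f (p.γ (clmp 1)) (p.γ' (clmp 1)) = 0
    have : clmp 1 = 1 := clmp_eq ⟨zero_le_one, le_refl _⟩
    rw [this, p.d1, ContinuousLinearMap.map_zero]
  ep0 := by
    show f (p.γ (clmp 0)) = f a
    have : clmp 0 = 0 := clmp_eq ⟨le_refl _, zero_le_one⟩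
    rw [this, p.ep0]
  ep1 := by
    show f (p.γ (clmp 1)) = f b
    have : clmp 1 = 1 := clmp_eq ⟨zero_le_one, le_refl _⟩
    rw [this, p.ep1]

theorem cost_map_le (hOpen : IsOpen M) (hBdd : Bornology.IsBounded M)
    {f : EuclideanSpace ℂ (Fin N) → EuclideanSpace ℂ (Fin N)}
    (hMaps : Set.MapsTo f M M) (hHol : DifferentiableOn ℂ f M)
    {ε : ℝ} (hε : 0 < ε) (hsub : Metric.thickening ε (f '' M) ⊆ M)
    (p : Path M a b) :
    cost (p.map hOpen hBdd hMaps hHol) ≤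
      (ENNReal.ofReal (1 + ε / (2 * (Metric.diam M + 1))))⁻¹ * cost p := by
  set lam := (ENNReal.ofReal (1 + ε / (2 * (Metric.diam M + 1))))⁻¹ with hlam
  have hτ0 : (0:ℝ) < ε / (2 * (Metric.diam M + 1)) := by
    have := Metric.diam_nonneg (s := M); positivity
  have hc0 : ENNReal.ofReal (1 + ε / (2 * (Metric.diam M + 1))) ≠ 0 := by
    simp only [ne_eq, ENNReal.ofReal_eq_zero, not_le]; linarith
  have hcT : ENNReal.ofReal (1 + ε / (2 * (Metric.diam M + 1))) ≠ ⊤ := ofReal_ne_top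
  unfold cost
  rw [← lintegral_const_mul' lam _ (by simp [hlam, hc0])]
  refine lintegral_mono_ae ?_
  filter_upwards [ae_restrict_mem measurableSet_Icc] with t ht
  have hct : clmp t = t := clmp_eq ht
  show gmet M (f (p.γ (clmp t))) (fderiv ℂ f (p.γ (clmp t)) (p.γ' (clmp t)))
      ≤ lam * gmet M (p.γ t) (p.γ' t)
  rw [hct]
  have hkey := gmet_contract hOpen hBdd hMaps hHol hε hsub (p.maps t ht) (p.γ' t)
  calc gmet M (f (p.γ t)) (fderiv ℂ f (p.γ t) (p.γ' t))
      = lam * (ENNReal.ofReal (1 + ε / (2 * (Metric.diam M + 1))) *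
        gmet M (f (p.γ t)) (fderiv ℂ f (p.γ t) (p.γ' t))) := by
        rw [← mul_assoc, hlam, ENNReal.inv_mul_cancel hc0 hcT, one_mul]
  _ ≤ lam * gmet M (p.γ t) (p.γ' t) := mul_le_mul_right hkey _

/-- A reparametrized straight segment. -/
def segPath {x y : EuclideanSpace ℂ (Fin N)} {r : ℝ}
    (hsub : closedBall x r ⊆ M) (hy : y ∈ closedBall x r) : Path M x y where
  γ := fun t => x + (t^2*(3-2*t)) • (y - x)
  γ' := fun t => (6*t-6*t^2) • (y - x)
  cont := by continuity
  meas := by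
    have : Continuous fun t : ℝ => (6*t-6*t^2) • (y - x) := by continuity
    exact this.measurable
  maps := by
    intro t ht
    obtain ⟨ht0, ht1⟩ := ht
    apply hsub
    rw [mem_closedBall, dist_self_add_left, norm_smul, Real.norm_eq_abs]
    have hr : ‖y - x‖ ≤ r := by rw [← dist_eq_norm]; exact hy
    have h1 : 0 ≤ t^2*(3-2*t) := by nlinarith
    have hkey : (0:ℝ) ≤ (1-t)^2*(1+2*t) := by positivity
    have h2 : t^2*(3-2*t) ≤ 1 := by nlinarith [hkey]
    rw [abs_of_nonneg h1]
    calc t^2*(3-2*t) * ‖y - x‖ ≤ 1 * r := by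
          apply mul_le_mul h2 hr (norm_nonneg _) zero_le_one
    _ = r := one_mul r
  hderiv := by
    intro t _
    have hσ : HasDerivAt (fun t : ℝ => t^2*(3-2*t)) (6*t-6*t^2) t := by
      have h1 : HasDerivAt (fun t : ℝ => t^2*(3-2*t))
          ((2*t^1) * (3-2*t) + t^2 * (0-2*1)) t := by
        exact (hasDerivAt_pow 2 t).mul ((hasDerivAt_const t 3).sub
          ((hasDerivAt_id t).const_mul 2))
      convert h1 using 1
      ring
    exact ((hσ.smul_const (y - x)).const_add x).hasDerivWithinAt
  bdd := by
    refine ⟨6 * ‖y - x‖, fun t ht => ?_⟩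
    obtain ⟨ht0, ht1⟩ := ht
    rw [norm_smul, Real.norm_eq_abs]
    have h1 : |6*t-6*t^2| ≤ 6 := by
      rw [abs_le]; constructor <;> nlinarith
    exact mul_le_mul_of_nonneg_right h1 (norm_nonneg _)
  d0 := by
    show ((6*(0:ℝ)-6*(0:ℝ)^2)) • (y - x) = 0
    norm_num
  d1 := by
    show ((6*(1:ℝ)-6*(1:ℝ)^2)) • (y - x) = 0
    norm_num
  ep0 := by
    show x + (((0:ℝ))^2*(3-2*0)) • (y - x) = x
    norm_num
  ep1 := by
    show x + ((1:ℝ)^2*(3-2*1)) • (y - x) = y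
    have h : ((1:ℝ)^2*(3-2*1)) = 1 := by norm_num
    rw [h, one_smul]
    abel

/-- Concatenation of two paths. -/
def Path.concat (p : Path M a b) (q : Path M b c) : Path M a c where
  γ := fun t => if t ≤ 1/2 then p.γ (2*t) else q.γ (2*t - 1)
  γ' := fun t => if t ≤ 1/2 then (2:ℝ) • p.γ' (2*t) else (2:ℝ) • q.γ' (2*t - 1)
  cont := by
    refine Continuous.if_le (p.cont.comp (by continuity)) (q.cont.comp (by continuity))
      continuous_id continuous_const fun t ht => ?_
    rw [ht]
    norm_num [p.ep1, q.ep0]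
  meas := by
    refine Measurable.ite measurableSet_Iic ?_ ?_
    · exact (p.meas.comp (measurable_id.const_mul 2)).const_smul (2:ℝ)
    · exact (q.meas.comp ((measurable_id.const_mul 2).sub_const 1)).const_smul (2:ℝ)
  maps := by
    intro t ht
    by_cases h : t ≤ 1/2
    · simp only [if_pos h]
      exact p.maps _ ⟨by linarith [ht.1], by linarith⟩
    · simp only [if_neg h]
      push_neg at h
      exact q.maps _ ⟨by linarith, by linarith [ht.2]⟩
  hderiv := by
    have hA : ∀ t ∈ Icc (0:ℝ) (1/2), HasDerivWithinAt
        (fun t => if t ≤ 1/2 then p.γ (2*t) else q.γ (2*t - 1))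
        ((2:ℝ) • p.γ' (2*t)) (Icc 0 (1/2)) t := by
      intro t ht
      have h2t : 2*t ∈ Icc (0:ℝ) 1 := ⟨by linarith [ht.1], by linarith [ht.2]⟩
      have hin : HasDerivWithinAt (fun s : ℝ => 2*s) 2 (Icc 0 (1/2)) t := by
        have := ((hasDerivAt_id t).const_mul 2).hasDerivWithinAt (s := Icc 0 (1/2))
        simpa using this
      have hmt : Set.MapsTo (fun s : ℝ => 2*s) (Icc 0 (1/2)) (Icc (0:ℝ) 1) := by
        intro s hs
        have : 2*s ∈ Icc (0:ℝ) 1 := ⟨by linarith [hs.1], by linarith [hs.2]⟩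
        exact this
      have hcomp : HasDerivWithinAt (fun s => p.γ (2*s)) ((2:ℝ) • p.γ' (2*t))
          (Icc 0 (1/2)) t := by
        have := (p.hderiv (2*t) h2t).scomp t hin hmt
        exact this
      refine hcomp.congr (fun s hs => ?_) ?_
      · rw [if_pos hs.2]
      · rw [if_pos ht.2]
    have hB : ∀ t ∈ Icc (1/2:ℝ) 1, HasDerivWithinAt
        (fun t => if t ≤ 1/2 then p.γ (2*t) else q.γ (2*t - 1))
        ((2:ℝ) • q.γ' (2*t-1)) (Icc (1/2) 1) t := by
      intro t ht
      have h2t : 2*t-1 ∈ Icc (0:ℝ) 1 := ⟨by linarith [ht.1], by linarith [ht.2]⟩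
      have hin : HasDerivWithinAt (fun s : ℝ => 2*s-1) 2 (Icc (1/2) 1) t := by
        have := (((hasDerivAt_id t).const_mul 2).sub_const 1).hasDerivWithinAt
          (s := Icc (1/2:ℝ) 1)
        simpa using this
      have hmt : Set.MapsTo (fun s : ℝ => 2*s-1) (Icc (1/2:ℝ) 1) (Icc (0:ℝ) 1) := by
        intro s hs
        have : 2*s-1 ∈ Icc (0:ℝ) 1 := ⟨by linarith [hs.1], by linarith [hs.2]⟩
        exact this
      have hcomp : HasDerivWithinAt (fun s => q.γ (2*s-1)) ((2:ℝ) • q.γ' (2*t-1))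
          (Icc (1/2) 1) t := by
        have := (q.hderiv (2*t-1) h2t).scomp t hin hmt
        exact this
      refine hcomp.congr (fun s hs => ?_) ?_
      · by_cases h : s ≤ 1/2
        · have hs2 : s = 1/2 := le_antisymm h hs.1
          subst hs2
          rw [if_pos le_rfl]
          have e1 : 2 * (1/2 : ℝ) = 1 := by norm_num
          have e2 : 2 * (1/2 : ℝ) - 1 = 0 := by norm_num
          rw [e2, e1, p.ep1, q.ep0]
        · rw [if_neg h]
      · by_cases h : t ≤ 1/2
        · have ht2 : t = 1/2 := le_antisymm h ht.1
          subst ht2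
          rw [if_pos le_rfl]
          have e1 : 2 * (1/2 : ℝ) = 1 := by norm_num
          have e2 : 2 * (1/2 : ℝ) - 1 = 0 := by norm_num
          rw [e2, e1, p.ep1, q.ep0]
        · rw [if_neg h]
    intro t ht
    have hsub2 : Icc (0:ℝ) 1 ⊆ Icc 0 (1/2) ∪ Icc (1/2) 1 := by
      intro s hs
      rcases le_total s (1/2) with h | h
      · exact Or.inl ⟨hs.1, h⟩
      · exact Or.inr ⟨h, hs.2⟩
    rcases lt_trichotomy t (1/2) with h | h | h
    · have h1 := hA t ⟨ht.1, h.le⟩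
      have h2 : HasDerivWithinAt
          (fun t => if t ≤ 1/2 then p.γ (2*t) else q.γ (2*t - 1))
          ((2:ℝ) • p.γ' (2*t)) (Icc (1/2) 1) t := by
        apply HasFDerivWithinAt.of_notMem_closure
        rw [IsClosed.closure_eq isClosed_Icc]
        intro hmem
        exact absurd hmem.1 (not_le.2 h)
      have := (h1.union h2).mono hsub2
      simpa only [if_pos h.le] using this
    · subst h
      have h1 := hA (1/2) ⟨by norm_num, le_rfl⟩
      have h2 := hB (1/2) ⟨le_rfl, by norm_num⟩
      have hv1 : (2:ℝ) • p.γ' (2*(1/2)) = 0 := by norm_num [p.d1]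
      have hv2 : (2:ℝ) • q.γ' (2*(1/2)-1) = 0 := by norm_num [q.d0]
      rw [hv1] at h1
      rw [hv2] at h2
      have := (h1.union h2).mono hsub2
      show HasDerivWithinAt _
        (if (1/2:ℝ) ≤ 1/2 then (2:ℝ) • p.γ' (2*(1/2)) else (2:ℝ) • q.γ' (2*(1/2)-1))
        (Icc 0 1) (1/2:ℝ)
      rw [if_pos le_rfl, hv1]
      exact this
    · have h1 := hB t ⟨h.le, ht.2⟩
      have h2 : HasDerivWithinAt
          (fun t => if t ≤ 1/2 then p.γ (2*t) else q.γ (2*t - 1))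
          ((2:ℝ) • q.γ' (2*t-1)) (Icc 0 (1/2)) t := by
        apply HasFDerivWithinAt.of_notMem_closure
        rw [IsClosed.closure_eq isClosed_Icc]
        intro hmem
        exact absurd hmem.2 (not_le.2 h)
      have := (h2.union h1).mono hsub2
      simpa only [if_neg (not_le.2 h)] using this
  bdd := by
    obtain ⟨C1, hC1⟩ := p.bdd
    obtain ⟨C2, hC2⟩ := q.bdd
    refine ⟨2 * max C1 C2, fun t ht => ?_⟩
    show ‖if t ≤ 1/2 then (2:ℝ) • p.γ' (2*t) else (2:ℝ) • q.γ' (2*t-1)‖ ≤ 2 * max C1 C2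
    by_cases h : t ≤ 1/2
    · rw [if_pos h, norm_smul, Real.norm_eq_abs]
      have h1 : ‖p.γ' (2*t)‖ ≤ C1 := hC1 _ ⟨by linarith [ht.1], by linarith⟩
      have h2 : |(2:ℝ)| = 2 := by norm_num
      rw [h2]
      have h3 := le_max_left C1 C2
      linarith
    · rw [if_neg h, norm_smul, Real.norm_eq_abs]
      push_neg at h
      have h1 : ‖q.γ' (2*t-1)‖ ≤ C2 := hC2 _ ⟨by linarith, by linarith [ht.2]⟩
      have h2 : |(2:ℝ)| = 2 := by norm_num
      rw [h2]
      have h3 := le_max_right C1 C2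
      linarith
  d0 := by
    show (if (0:ℝ) ≤ 1/2 then (2:ℝ) • p.γ' (2*0) else (2:ℝ) • q.γ' (2*0-1)) = 0
    rw [if_pos (by norm_num : (0:ℝ) ≤ 1/2)]
    norm_num [p.d0]
  d1 := by
    show (if (1:ℝ) ≤ 1/2 then (2:ℝ) • p.γ' (2*1) else (2:ℝ) • q.γ' (2*1-1)) = 0
    rw [if_neg (by norm_num : ¬(1:ℝ) ≤ 1/2)]
    norm_num [q.d1]
  ep0 := by
    show (if (0:ℝ) ≤ 1/2 then p.γ (2*0) else q.γ (2*0-1)) = a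
    rw [if_pos (by norm_num : (0:ℝ) ≤ 1/2)]
    norm_num [p.ep0]
  ep1 := by
    show (if (1:ℝ) ≤ 1/2 then p.γ (2*1) else q.γ (2*1-1)) = c
    rw [if_neg (by norm_num : ¬(1:ℝ) ≤ 1/2)]
    norm_num [q.ep1]


/-! ## Connectivity -/

theorem nonempty_path (hOpen : IsOpen M) (hConn : IsConnected M)
    (ha : a ∈ M) (hb : b ∈ M) : Nonempty (Path M a b) := by
  set S : Set (EuclideanSpace ℂ (Fin N)) := {y | y ∈ M ∧ Nonempty (Path M a y)} with hS
  have haS : a ∈ S := by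
    refine ⟨ha, ⟨segPath (x := a) (r := 0) ?_ ?_⟩⟩
    · rw [closedBall_zero]; exact singleton_subset_iff.2 ha
    · exact mem_closedBall_self le_rfl
  have hSopen : IsOpen S := by
    rw [Metric.isOpen_iff]
    rintro y ⟨hyM, ⟨p⟩⟩
    obtain ⟨r, hr, hball⟩ := Metric.isOpen_iff.1 hOpen y hyM
    refine ⟨r/2, by linarith, fun z hz => ?_⟩
    have hzM : z ∈ M := hball (ball_subset_ball (by linarith) hz)
    have hcb : closedBall y (r/2) ⊆ M := by
      refine subset_trans ?_ hball
      intro w hw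
      rw [mem_ball]
      calc dist w y ≤ r/2 := hw
      _ < r := by linarith
    have hzc : z ∈ closedBall y (r/2) := ball_subset_closedBall hz
    exact ⟨hzM, ⟨p.concat (segPath hcb hzc)⟩⟩
  have hTopen : IsOpen (M \ S) := by
    rw [Metric.isOpen_iff]
    rintro y ⟨hyM, hyS⟩
    obtain ⟨r, hr, hball⟩ := Metric.isOpen_iff.1 hOpen y hyM
    refine ⟨r/2, by linarith, fun z hz => ?_⟩
    have hzM : z ∈ M := hball (ball_subset_ball (by linarith) hz)
    refine ⟨hzM, fun hzS => hyS ?_⟩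
    obtain ⟨-, ⟨p⟩⟩ := hzS
    have hcb : closedBall z (r/2) ⊆ M := by
      intro w hw
      apply hball
      rw [mem_ball]
      have h1 : dist w z ≤ r/2 := hw
      have h2 : dist z y < r/2 := hz
      calc dist w y ≤ dist w z + dist z y := dist_triangle _ _ _
      _ < r := by linarith
    have hyc : y ∈ closedBall z (r/2) := by
      rw [mem_closedBall, dist_comm]
      exact (mem_ball.1 hz).le
    exact ⟨hyM, ⟨p.concat (segPath hcb hyc)⟩⟩
  by_contra hnb
  have hbT : b ∈ M \ S := ⟨hb, fun hbS => hnb hbS.2⟩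
  obtain ⟨x, hxM, hxS, hxT⟩ :=
    hConn.isPreconnected S (M \ S) hSopen hTopen
      (fun y hy => by by_cases h : y ∈ S; exact Or.inl h; exact Or.inr ⟨hy, h⟩)
      ⟨a, ha, haS⟩ ⟨b, hb, hbT⟩
  exact hxT.2 hxS

/-! ## The pseudodistance -/

def pdist (M : Set (EuclideanSpace ℂ (Fin N))) (a b : EuclideanSpace ℂ (Fin N)) : ℝ≥0∞ :=
  ⨅ p : Path M a b, cost p

theorem pdist_lt_top (hOpen : IsOpen M) (hConn : IsConnected M)
    (ha : a ∈ M) (hb : b ∈ M) : pdist M a b < ⊤ := by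
  obtain ⟨p⟩ := nonempty_path hOpen hConn ha hb
  exact (iInf_le _ p).trans_lt (cost_lt_top hOpen p)

theorem pdist_lower (hBdd : Bornology.IsBounded M) (a b : EuclideanSpace ℂ (Fin N)) :
    ENNReal.ofReal ‖b - a‖ ≤ ENNReal.ofReal (Metric.diam M + 1) * pdist M a b := by
  have hD : (0:ℝ) < Metric.diam M + 1 := by
    have := Metric.diam_nonneg (s := M); linarith
  rw [pdist, ENNReal.mul_iInf_of_ne (by simp [hD]) ofReal_ne_top]
  exact le_iInf fun p => p.lower hBdd

theorem pdist_contract (hOpen : IsOpen M) (hBdd : Bornology.IsBounded M)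
    {f : EuclideanSpace ℂ (Fin N) → EuclideanSpace ℂ (Fin N)}
    (hMaps : Set.MapsTo f M M) (hHol : DifferentiableOn ℂ f M)
    {ε : ℝ} (hε : 0 < ε) (hsub : Metric.thickening ε (f '' M) ⊆ M)
    (a b : EuclideanSpace ℂ (Fin N)) :
    pdist M (f a) (f b) ≤
      (ENNReal.ofReal (1 + ε / (2 * (Metric.diam M + 1))))⁻¹ * pdist M a b := by
  have hτ0 : (0:ℝ) < ε / (2 * (Metric.diam M + 1)) := by
    have := Metric.diam_nonneg (s := M); positivity
  have hlam0 : (ENNReal.ofReal (1 + ε / (2 * (Metric.diam M + 1))))⁻¹ ≠ 0 := by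
    simp [ENNReal.inv_ne_zero]
  have hlamtop : (ENNReal.ofReal (1 + ε / (2 * (Metric.diam M + 1))))⁻¹ ≠ ⊤ := by
    rw [ENNReal.inv_ne_top]
    simp only [ne_eq, ENNReal.ofReal_eq_zero, not_le]
    linarith
  calc pdist M (f a) (f b) ≤ ⨅ p : Path M a b,
      (ENNReal.ofReal (1 + ε / (2 * (Metric.diam M + 1))))⁻¹ * cost p := by
        refine le_iInf fun p => ?_
        exact (iInf_le _ (p.map hOpen hBdd hMaps hHol)).trans
          (cost_map_le hOpen hBdd hMaps hHol hε hsub p)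
  _ = (ENNReal.ofReal (1 + ε / (2 * (Metric.diam M + 1))))⁻¹ * pdist M a b :=
      (ENNReal.mul_iInf_of_ne hlam0 hlamtop).symm

end EHproof

/-- Earle–Hamilton: a holomorphic map of a bounded connected open set M ⊂ ℂ^N
into itself which maps M strictly inside M has a unique fixed point. -/
theorem stmt_1 (N : ℕ) (M : Set (EuclideanSpace ℂ (Fin N)))
    (hOpen : IsOpen M) (hConn : IsConnected M) (hBdd : Bornology.IsBounded M)
    (f : EuclideanSpace ℂ (Fin N) → EuclideanSpace ℂ (Fin N))
    (hMaps : Set.MapsTo f M M) (hHol : DifferentiableOn ℂ f M)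
    (hStrict : ∃ ε > (0 : ℝ), Metric.thickening ε (f '' M) ⊆ M) :
    ∃! x, x ∈ M ∧ f x = x := by
  classical
  obtain ⟨ε, hε, hsub⟩ := hStrict
  set D := Metric.diam M with hD
  have hD0 : (0:ℝ) ≤ D := Metric.diam_nonneg
  set τ : ℝ := ε / (2 * (D + 1)) with hτ
  have hτ0 : 0 < τ := by positivity
  set lam : ℝ≥0∞ := (ENNReal.ofReal (1 + τ))⁻¹ with hlam
  have hlam_lt_one : lam < 1 := by
    rw [hlam, ENNReal.inv_lt_one, ENNReal.one_lt_ofReal]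
    linarith
  have hlam_ne_top : lam ≠ ⊤ := by
    rw [hlam, ENNReal.inv_ne_top]
    simp only [ne_eq, ENNReal.ofReal_eq_zero, not_le]
    linarith
  have hcontr : ∀ a b : EuclideanSpace ℂ (Fin N),
      EHproof.pdist M (f a) (f b) ≤ lam * EHproof.pdist M a b :=
    fun a b => EHproof.pdist_contract hOpen hBdd hMaps hHol hε hsub a b
  -- uniqueness of fixed points
  have huniq : ∀ y z : EuclideanSpace ℂ (Fin N), y ∈ M → z ∈ M → f y = y → f z = z →
      y = z := by
    intro y z hy hz hfy hfz
    have hd : EHproof.pdist M y z ≤ lam * EHproof.pdist M y z := by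
      have := hcontr y z
      rwa [hfy, hfz] at this
    have hdtop : EHproof.pdist M y z ≠ ⊤ :=
      (EHproof.pdist_lt_top hOpen hConn hy hz).ne
    have hd0 : EHproof.pdist M y z = 0 := by
      by_contra h0
      have : lam * EHproof.pdist M y z < 1 * EHproof.pdist M y z :=
        by rw [mul_comm lam, mul_comm 1]; exact ENNReal.mul_lt_mul_right h0 hdtop hlam_lt_one
      rw [one_mul] at this
      exact absurd (hd.trans_lt this) (lt_irrefl _)
    have := EHproof.pdist_lower hBdd y z
    rw [hd0, mul_zero, le_zero_iff, ENNReal.ofReal_eq_zero] at this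
    have : z - y = 0 := by
      have h1 : ‖z - y‖ ≤ 0 := this
      have h2 : 0 ≤ ‖z - y‖ := norm_nonneg _
      exact norm_eq_zero.1 (le_antisymm h1 h2)
    have : z = y := by rwa [sub_eq_zero] at this
    exact this.symm
  -- existence via iteration
  obtain ⟨x₀, hx₀⟩ := hConn.nonempty
  set x : ℕ → EuclideanSpace ℂ (Fin N) := fun n => f^[n] x₀ with hx
  have hxM : ∀ n, x n ∈ M := by
    intro n
    induction n with
    | zero => exact hx₀
    | succ n ih =>
      show f^[n+1] x₀ ∈ M
      rw [Function.iterate_succ_apply']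
      exact hMaps ih
  have hstep : ∀ n, x (n+1) = f (x n) := by
    intro n
    show f^[n+1] x₀ = f (f^[n] x₀)
    rw [Function.iterate_succ_apply']
  set d : ℕ → ℝ≥0∞ := fun n => EHproof.pdist M (x n) (x (n+1)) with hd
  have hd_le : ∀ n, d n ≤ lam ^ n * d 0 := by
    intro n
    induction n with
    | zero => simp
    | succ n ih =>
      have h1 : d (n+1) ≤ lam * d n := by
        have h2 := hcontr (x n) (x (n+1))
        rw [← hstep (n+1), ← hstep n] at h2
        exact h2
      calc d (n+1) ≤ lam * d n := h1
      _ ≤ lam * (lam ^ n * d 0) := mul_le_mul_right ih _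
      _ = lam ^ (n+1) * d 0 := by ring
  have hd0top : d 0 ≠ ⊤ := (EHproof.pdist_lt_top hOpen hConn (hxM 0) (hxM 1)).ne
  -- Cauchy sequence
  have hdist : ∀ n, dist (x n) (x (n+1)) ≤ ((D + 1) * (d 0).toReal) * lam.toReal ^ n := by
    intro n
    have h1 := EHproof.pdist_lower hBdd (x n) (x (n+1))
    have h2 : ENNReal.ofReal ‖x (n+1) - x n‖ ≤
        ENNReal.ofReal (D + 1) * (lam ^ n * d 0) :=
      h1.trans (mul_le_mul_right (hd_le n) _)
    have h3 : ENNReal.ofReal (D + 1) * (lam ^ n * d 0) ≠ ⊤ := by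
      refine ENNReal.mul_ne_top ofReal_ne_top (ENNReal.mul_ne_top ?_ hd0top)
      exact ENNReal.pow_ne_top hlam_ne_top
    have h4 := ENNReal.toReal_mono h3 h2
    rw [ENNReal.toReal_ofReal (norm_nonneg _)] at h4
    rw [dist_eq_norm, norm_sub_rev]
    calc ‖x (n+1) - x n‖ ≤ (ENNReal.ofReal (D + 1) * (lam ^ n * d 0)).toReal := h4
    _ = (D + 1) * (lam.toReal ^ n * (d 0).toReal) := by
        rw [ENNReal.toReal_mul, ENNReal.toReal_mul, ENNReal.toReal_pow,
          ENNReal.toReal_ofReal (by linarith)]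
    _ = ((D + 1) * (d 0).toReal) * lam.toReal ^ n := by ring
  have hr1 : lam.toReal < 1 := by
    rw [hlam, ENNReal.toReal_inv, ENNReal.toReal_ofReal (by linarith)]
    rw [inv_lt_one_iff₀]
    right; linarith
  have hcauchy : CauchySeq x :=
    cauchySeq_of_le_geometric lam.toReal ((D + 1) * (d 0).toReal) hr1 hdist
  obtain ⟨xs, hxs⟩ := cauchySeq_tendsto_of_complete hcauchy
  have hxsM : xs ∈ M := by
    apply hsub
    apply Metric.closure_subset_thickening hε (f '' M)
    refine mem_closure_of_tendsto (hxs.comp (Filter.tendsto_add_atTop_nat 1)) ?_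
    refine Filter.Eventually.of_forall fun n => ?_
    exact ⟨x n, hxM n, (hstep n).symm⟩
  have hfix : f xs = xs := by
    have hcont : ContinuousAt f xs :=
      (hHol.differentiableAt (hOpen.mem_nhds hxsM)).continuousAt
    have h1 : Filter.Tendsto (fun n => f (x n)) Filter.atTop (nhds (f xs)) :=
      hcont.tendsto.comp hxs
    have h2 : Filter.Tendsto (fun n => x (n+1)) Filter.atTop (nhds (f xs)) := by
      refine h1.congr fun n => (hstep n).symm
    have h3 : Filter.Tendsto (fun n => x (n+1)) Filter.atTop (nhds xs) :=
      hxs.comp (Filter.tendsto_add_atTop_nat 1)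
    exact tendsto_nhds_unique h2 h3
  exact ⟨xs, ⟨hxsM, hfix⟩, fun y hy => huniq y xs hy.1 hxsM hy.2 hfix⟩
end
end

section
/- Let M ⊂ ℂ^N be a bounded connected open set and let f : M → M be holomorphic such that f maps M strictly inside M, i.e. there exists ε > 0 such that the ε-neighbourhood of f(M) is contained in M. Then for every integer m ≥ 1 the iterate f^m has a unique fixed point in M, and this fixed point coincides with the unique fixed point of f; consequently the set of periods of periodic points of f is exactly {1}. -/
open Metric Set Function

noncomputable section EH

variable {N : ℕ}

/-- Members of the defining family for the Carathéodory–Reiffen metric. -/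
def ehS (M : Set (EuclideanSpace ℂ (Fin N))) (x v : EuclideanSpace ℂ (Fin N)) : Set ℝ :=
  {r | ∃ g : EuclideanSpace ℂ (Fin N) → ℂ,
    DifferentiableOn ℂ g M ∧ (∀ z ∈ M, ‖g z‖ ≤ 1) ∧ r = ‖fderiv ℂ g x v‖}

/-- The Carathéodory–Reiffen infinitesimal metric. -/
def ehA (M : Set (EuclideanSpace ℂ (Fin N))) (x v : EuclideanSpace ℂ (Fin N)) : ℝ :=
  sSup (ehS M x v)

lemma ehS_zero_mem (M : Set (EuclideanSpace ℂ (Fin N))) (x v : EuclideanSpace ℂ (Fin N)) :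
    (0 : ℝ) ∈ ehS M x v := by
  refine ⟨fun _ => 0, differentiableOn_const 0, fun z _ => by simp, ?_⟩
  simp [fderiv_const]

lemma ehS_bound {M : Set (EuclideanSpace ℂ (Fin N))} {x v : EuclideanSpace ℂ (Fin N)} {ρ : ℝ}
    (hρ : 0 < ρ) (hball : ball x ρ ⊆ M) :
    ∀ r ∈ ehS M x v, r ≤ 3 * ‖v‖ / ρ := by
  rintro r ⟨g, hg, hgb, rfl⟩
  rcases eq_or_ne v 0 with rfl | hv
  · simp [hρ.le]
  have hvn : 0 < ‖v‖ := norm_pos_iff.2 hv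
  set L : ℂ → EuclideanSpace ℂ (Fin N) := fun w => x + w • v with hL
  have hmapsL : MapsTo L (ball (0:ℂ) (ρ / ‖v‖)) (ball x ρ) := by
    intro w hw
    simp only [mem_ball, dist_eq_norm, hL] at hw ⊢
    rw [add_sub_cancel_left, norm_smul]
    calc ‖w‖ * ‖v‖ < ρ / ‖v‖ * ‖v‖ := by
          apply mul_lt_mul_of_pos_right _ hvn
          simpa using hw
      _ = ρ := div_mul_cancel₀ _ hvn.ne'
  have hdL : Differentiable ℂ L := by
    apply differentiable_const _ |>.add
    exact (differentiable_id.smul_const v)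
  have hd : DifferentiableOn ℂ (g ∘ L) (ball (0:ℂ) (ρ / ‖v‖)) :=
    (hg.mono hball).comp hdL.differentiableOn hmapsL
  have hmaps2 : MapsTo (g ∘ L) (ball (0:ℂ) (ρ / ‖v‖)) (ball ((g ∘ L) 0) 3) := by
    intro w hw
    have h0 : (0:ℂ) ∈ ball (0:ℂ) (ρ / ‖v‖) := by
      simp [div_pos hρ hvn]
    have hb1 : ‖g (L w)‖ ≤ 1 := hgb _ (hball (hmapsL hw))
    have hb2 : ‖g (L 0)‖ ≤ 1 := hgb _ (hball (hmapsL h0))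
    simp only [mem_ball, comp_apply, dist_eq_norm]
    calc ‖g (L w) - g (L 0)‖ ≤ ‖g (L w)‖ + ‖g (L 0)‖ := norm_sub_le _ _
      _ ≤ 1 + 1 := add_le_add hb1 hb2
      _ < 3 := by norm_num
  have hSch := Complex.norm_deriv_le_div_of_mapsTo_ball hd (hmaps2.mono_right ball_subset_closedBall) (div_pos hρ hvn)
  have hL0 : L 0 = x := by simp [hL]
  have hgd : DifferentiableAt ℂ g x :=
    hg.differentiableAt (Filter.mem_of_superset (isOpen_ball.mem_nhds (mem_ball_self hρ)) hball)
  have hline : HasDerivAt L v 0 := by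
    have : HasDerivAt (fun w : ℂ => w • v) ((1:ℂ) • v) 0 := (hasDerivAt_id (0:ℂ)).smul_const v
    simpa [hL] using this.const_add x
  have hcomp : HasDerivAt (g ∘ L) (fderiv ℂ g x v) 0 := by
    have hgd' : HasFDerivAt g (fderiv ℂ g x) (L 0) := hL0 ▸ hgd.hasFDerivAt
    exact hgd'.comp_hasDerivAt 0 hline
  rw [hcomp.deriv] at hSch
  calc ‖fderiv ℂ g x v‖ ≤ 3 / (ρ / ‖v‖) := hSch
    _ = 3 * ‖v‖ / ρ := by field_simp

variable {M : Set (EuclideanSpace ℂ (Fin N))} {x v : EuclideanSpace ℂ (Fin N)} {ρ : ℝ}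

lemma ehS_bddAbove (hOpen : IsOpen M) (hx : x ∈ M) : BddAbove (ehS M x v) := by
  obtain ⟨ρ, hρ, hball⟩ := Metric.isOpen_iff.1 hOpen x hx
  exact ⟨3 * ‖v‖ / ρ, fun r hr => ehS_bound hρ hball r hr⟩

lemma ehA_nonneg (hOpen : IsOpen M) (hx : x ∈ M) : 0 ≤ ehA M x v :=
  le_csSup (ehS_bddAbove hOpen hx) (ehS_zero_mem M x v)

lemma le_ehA (hOpen : IsOpen M) (hx : x ∈ M) {g : EuclideanSpace ℂ (Fin N) → ℂ}
    (hg : DifferentiableOn ℂ g M) (hgb : ∀ z ∈ M, ‖g z‖ ≤ 1) :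
    ‖fderiv ℂ g x v‖ ≤ ehA M x v :=
  le_csSup (ehS_bddAbove hOpen hx) ⟨g, hg, hgb, rfl⟩

lemma ehA_le (hρ : 0 < ρ) (hball : ball x ρ ⊆ M) : ehA M x v ≤ 3 * ‖v‖ / ρ :=
  csSup_le ⟨0, ehS_zero_mem M x v⟩ (ehS_bound hρ hball)

/-- Non-expansion of the CR metric under holomorphic self-maps. -/
lemma ehA_nonexpand (hOpen : IsOpen M) {h : EuclideanSpace ℂ (Fin N) → EuclideanSpace ℂ (Fin N)}
    (hmaps : Set.MapsTo h M M) (hd : DifferentiableOn ℂ h M) (hx : x ∈ M) :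
    ehA M (h x) (fderiv ℂ h x v) ≤ ehA M x v := by
  apply csSup_le ⟨0, ehS_zero_mem M _ _⟩
  rintro r ⟨g, hg, hgb, rfl⟩
  have hdx : DifferentiableAt ℂ h x := hd.differentiableAt (hOpen.mem_nhds hx)
  have hgx : DifferentiableAt ℂ g (h x) := hg.differentiableAt (hOpen.mem_nhds (hmaps hx))
  have hcomp : fderiv ℂ (g ∘ h) x = (fderiv ℂ g (h x)).comp (fderiv ℂ h x) :=
    fderiv_comp x hgx hdx
  have : ‖fderiv ℂ g (h x) (fderiv ℂ h x v)‖ = ‖fderiv ℂ (g ∘ h) x v‖ := by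
    rw [hcomp]; rfl
  rw [this]
  exact le_ehA hOpen hx (hg.comp hd hmaps) (fun z hz => hgb _ (hmaps hz))

lemma ehA_smul_le (hOpen : IsOpen M) (hx : x ∈ M) {c : ℂ} (hc : c ≠ 0) :
    ‖c‖ * ehA M x v ≤ ehA M x (c • v) := by
  rw [mul_comm, ← le_div_iff₀ (norm_pos_iff.2 hc)]
  apply csSup_le ⟨0, ehS_zero_mem M x v⟩
  rintro r ⟨g, hg, hgb, rfl⟩
  rw [le_div_iff₀ (norm_pos_iff.2 hc), mul_comm, ← norm_smul, ← map_smul]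
  exact le_ehA hOpen hx hg hgb

/-- Lower bound by the Euclidean norm. -/
lemma ehA_lower (hOpen : IsOpen M) (hx : x ∈ M) {D : ℝ} (hD : 0 < D)
    (hdiam : ∀ z ∈ M, ‖z - x‖ ≤ D) : ‖v‖ / D ≤ ehA M x v := by
  rcases eq_or_ne v 0 with rfl | hv
  · simpa using ehA_nonneg hOpen hx
  have hvn : 0 < ‖v‖ := norm_pos_iff.2 hv
  set c : ℝ := (‖v‖ * D)⁻¹ with hc
  have hcpos : 0 < c := by positivity
  set g : EuclideanSpace ℂ (Fin N) → ℂ :=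
    fun z => (c : ℂ) • ((innerSL ℂ v) z) - (c : ℂ) • ((innerSL ℂ v) x) with hgdef
  have hfd : ∀ y, HasFDerivAt g ((c : ℂ) • (innerSL ℂ v)) y := fun y =>
    ((innerSL ℂ v).hasFDerivAt.const_smul (c:ℂ)).sub_const _
  have hgb : ∀ z ∈ M, ‖g z‖ ≤ 1 := by
    intro z hz
    have : g z = (c : ℂ) * (inner ℂ v (z - x) : ℂ) := by
      simp [hgdef, inner_sub_right, mul_sub, smul_eq_mul]
    rw [this, norm_mul]
    have h1 : ‖(c : ℂ)‖ = c := by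
      simp [Complex.norm_real, abs_of_pos hcpos]
    have h2 : ‖(inner ℂ v (z - x) : ℂ)‖ ≤ ‖v‖ * ‖z - x‖ := norm_inner_le_norm v (z - x)
    calc ‖(c:ℂ)‖ * ‖(inner ℂ v (z-x) : ℂ)‖ ≤ c * (‖v‖ * D) := by
          rw [h1]
          exact mul_le_mul_of_nonneg_left (h2.trans
            (mul_le_mul_of_nonneg_left (hdiam z hz) hvn.le)) hcpos.le
      _ = 1 := inv_mul_cancel₀ (by positivity)
  have hkey : ‖fderiv ℂ g x v‖ = ‖v‖ / D := by
    rw [(hfd x).fderiv]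
    have : ((c : ℂ) • (innerSL ℂ v)) v = (c : ℂ) * (inner ℂ v v : ℂ) := rfl
    rw [this, inner_self_eq_norm_sq_to_K, norm_mul]
    simp only [Complex.norm_real, Real.norm_eq_abs, abs_of_pos hcpos]
    rw [hc, norm_pow, RCLike.norm_ofReal, abs_of_nonneg hvn.le]
    field_simp
  calc ‖v‖ / D = ‖fderiv ℂ g x v‖ := hkey.symm
    _ ≤ ehA M x v := le_ehA hOpen hx (fun y hy => (hfd y).differentiableAt.differentiableWithinAt) hgb

/-- The Earle–Hamilton strict contraction of the CR metric. -/
lemma ehA_contract (hOpen : IsOpen M) (hBdd : Bornology.IsBounded M)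
    {f : EuclideanSpace ℂ (Fin N) → EuclideanSpace ℂ (Fin N)}
    (hMaps : Set.MapsTo f M M) (hHol : DifferentiableOn ℂ f M)
    {ε : ℝ} (hε : 0 < ε) (hth : Metric.thickening ε (f '' M) ⊆ M)
    {w : EuclideanSpace ℂ (Fin N)} (hw : w ∈ M) (v : EuclideanSpace ℂ (Fin N)) :
    ehA M (f w) (fderiv ℂ f w v) ≤
      (1 + ε / (2 * (Metric.diam M + 1)))⁻¹ * ehA M w v := by
  set D : ℝ := Metric.diam M + 1 with hD
  have hdiamnn : 0 ≤ Metric.diam M := Metric.diam_nonneg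
  have hDpos : 0 < D := by positivity
  set t : ℝ := ε / (2 * D) with ht
  have htpos : 0 < t := by positivity
  set c : ℂ := ((1 + t : ℝ) : ℂ) with hc
  have hcne : c ≠ 0 := by
    simp only [hc, ne_eq, Complex.ofReal_eq_zero]
    positivity
  have hcnorm : ‖c‖ = 1 + t := by
    rw [hc, Complex.norm_real, Real.norm_eq_abs, abs_of_pos (by positivity)]
  set h : EuclideanSpace ℂ (Fin N) → EuclideanSpace ℂ (Fin N) :=
    fun x => f x + ((t : ℝ) : ℂ) • (f x - f w) with hhdef
  have hmapsh : Set.MapsTo h M M := by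
    intro x hx
    apply hth
    rw [Metric.mem_thickening_iff]
    refine ⟨f x, ⟨x, hx, rfl⟩, ?_⟩
    have hne : dist (h x) (f x) = t * ‖f x - f w‖ := by
      simp only [hhdef, dist_eq_norm, add_sub_cancel_left, norm_smul]
      rw [Complex.norm_real, Real.norm_eq_abs, abs_of_pos htpos]
    rw [hne]
    have hdd : ‖f x - f w‖ ≤ Metric.diam M := by
      rw [← dist_eq_norm]
      exact Metric.dist_le_diam_of_mem hBdd (hMaps hx) (hMaps hw)
    calc t * ‖f x - f w‖ ≤ t * D := by
          apply mul_le_mul_of_nonneg_left _ htpos.le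
          exact hdd.trans (by simp [hD])
      _ = ε / 2 := by rw [ht]; field_simp
      _ < ε := by linarith
  have hdh : DifferentiableOn ℂ h M :=
    hHol.add (((hHol.sub (differentiableOn_const (f w))).const_smul ((t : ℝ) : ℂ)))
  have hfw : DifferentiableAt ℂ f w := hHol.differentiableAt (hOpen.mem_nhds hw)
  set L : EuclideanSpace ℂ (Fin N) →L[ℂ] EuclideanSpace ℂ (Fin N) := fderiv ℂ f w with hL
  have Hh : HasFDerivAt h (L + ((t : ℝ) : ℂ) • L) w :=
    hfw.hasFDerivAt.add ((hfw.hasFDerivAt.sub_const (f w)).const_smul ((t : ℝ) : ℂ))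
  have hhw : h w = f w := by simp [hhdef]
  have hval : fderiv ℂ h w v = c • (L v) := by
    rw [Hh.fderiv]
    simp only [ContinuousLinearMap.add_apply, ContinuousLinearMap.smul_apply, hc]
    push_cast
    module
  have key : ‖c‖ * ehA M (f w) (L v) ≤ ehA M w v := by
    calc ‖c‖ * ehA M (f w) (L v) ≤ ehA M (f w) (c • (L v)) :=
          ehA_smul_le hOpen (hMaps hw) hcne
      _ = ehA M (h w) (fderiv ℂ h w v) := by rw [hhw, hval]
      _ ≤ ehA M w v := ehA_nonexpand hOpen hmapsh hdh hw
  rw [hcnorm] at key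
  have hnn : 0 ≤ ehA M (f w) (L v) := ehA_nonneg hOpen (hMaps hw)
  rw [inv_mul_eq_div, le_div_iff₀ (by positivity : (0:ℝ) < 1 + t)]
  linarith [key]

/-- Iterates are differentiable on M. -/
lemma eh_iter_diff (hOpen : IsOpen M)
    {f : EuclideanSpace ℂ (Fin N) → EuclideanSpace ℂ (Fin N)}
    (hMaps : Set.MapsTo f M M) (hHol : DifferentiableOn ℂ f M) :
    ∀ n, ∀ x ∈ M, DifferentiableAt ℂ (f^[n]) x := by
  intro n
  induction n with
  | zero => intro x hx; simp only [Function.iterate_zero]; exact differentiableAt_id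
  | succ n ih =>
    intro x hx
    rw [Function.iterate_succ']
    exact (hHol.differentiableAt (hOpen.mem_nhds (hMaps.iterate n hx))).comp x (ih x hx)

/-- Geometric decay of the CR metric along iterates. -/
lemma ehA_iter (hOpen : IsOpen M) (hBdd : Bornology.IsBounded M)
    {f : EuclideanSpace ℂ (Fin N) → EuclideanSpace ℂ (Fin N)}
    (hMaps : Set.MapsTo f M M) (hHol : DifferentiableOn ℂ f M)
    {ε : ℝ} (hε : 0 < ε) (hth : Metric.thickening ε (f '' M) ⊆ M) :
    ∀ n, ∀ x ∈ M, ∀ v,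
      ehA M (f^[n] x) (fderiv ℂ (f^[n]) x v) ≤
        ((1 + ε / (2 * (Metric.diam M + 1)))⁻¹) ^ n * ehA M x v := by
  have hdiamnn : 0 ≤ Metric.diam M := Metric.diam_nonneg
  set r : ℝ := (1 + ε / (2 * (Metric.diam M + 1)))⁻¹ with hr
  have hrpos : 0 < r := by rw [hr]; positivity
  intro n
  induction n with
  | zero =>
    intro x hx v
    simp [fderiv_id']
  | succ n ih =>
    intro x hx v
    have hxM : f^[n] x ∈ M := hMaps.iterate n hx
    have hdn : DifferentiableAt ℂ (f^[n]) x := eh_iter_diff hOpen hMaps hHol n x hx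
    have hdf : DifferentiableAt ℂ f (f^[n] x) := hHol.differentiableAt (hOpen.mem_nhds hxM)
    have hit : f^[n+1] = f ∘ f^[n] := Function.iterate_succ' f n
    have hfd : fderiv ℂ (f^[n+1]) x = (fderiv ℂ f (f^[n] x)).comp (fderiv ℂ (f^[n]) x) := by
      rw [hit]; exact fderiv_comp x hdf hdn
    have happ : f^[n+1] x = f (f^[n] x) := Function.iterate_succ_apply' f n x
    rw [happ, hfd]
    have h1 : ehA M (f (f^[n] x)) ((fderiv ℂ f (f^[n] x)) ((fderiv ℂ (f^[n]) x) v)) ≤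
        r * ehA M (f^[n] x) ((fderiv ℂ (f^[n]) x) v) :=
      ehA_contract hOpen hBdd hMaps hHol hε hth hxM _
    have h2 := ih x hx v
    have hcomp : ((fderiv ℂ f (f^[n] x)).comp (fderiv ℂ (f^[n]) x)) v
        = (fderiv ℂ f (f^[n] x)) ((fderiv ℂ (f^[n]) x) v) := rfl
    rw [hcomp]
    calc ehA M (f (f^[n] x)) ((fderiv ℂ f (f^[n] x)) ((fderiv ℂ (f^[n]) x) v))
        ≤ r * ehA M (f^[n] x) ((fderiv ℂ (f^[n]) x) v) := h1
      _ ≤ r * (r ^ n * ehA M x v) := mul_le_mul_of_nonneg_left h2 hrpos.le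
      _ = r ^ (n + 1) * ehA M x v := by ring

/-- Operator norm decay of iterate derivatives on the half-thickening of the image. -/
lemma eh_deriv_bound (hOpen : IsOpen M) (hBdd : Bornology.IsBounded M)
    {f : EuclideanSpace ℂ (Fin N) → EuclideanSpace ℂ (Fin N)}
    (hMaps : Set.MapsTo f M M) (hHol : DifferentiableOn ℂ f M)
    {ε : ℝ} (hε : 0 < ε) (hth : Metric.thickening ε (f '' M) ⊆ M) :
    ∀ x ∈ Metric.thickening (ε/2) (f '' M), ∀ n,
      ‖fderiv ℂ (f^[n]) x‖ ≤ (6 * (Metric.diam M + 1) / ε) *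
        ((1 + ε / (2 * (Metric.diam M + 1)))⁻¹) ^ n := by
  have hdiamnn : 0 ≤ Metric.diam M := Metric.diam_nonneg
  set D : ℝ := Metric.diam M + 1 with hD
  have hDpos : 0 < D := by positivity
  set r : ℝ := (1 + ε / (2 * D))⁻¹ with hr
  have hrpos : 0 < r := by rw [hr]; positivity
  intro x hx n
  have hball : ball x (ε/2) ⊆ M := by
    intro y hy
    apply hth
    rw [Metric.mem_thickening_iff] at hx ⊢
    obtain ⟨z, hz, hdz⟩ := hx
    exact ⟨z, hz, (dist_triangle y x z).trans_lt (by
      rw [mem_ball] at hy; linarith)⟩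
  have hxM : x ∈ M := hball (mem_ball_self (by positivity))
  apply ContinuousLinearMap.opNorm_le_bound _ (by positivity)
  intro v
  have hfnx : f^[n] x ∈ M := hMaps.iterate n hxM
  have hlow : ‖fderiv ℂ (f^[n]) x v‖ / D ≤ ehA M (f^[n] x) (fderiv ℂ (f^[n]) x v) := by
    apply ehA_lower hOpen hfnx hDpos
    intro z hz
    rw [← dist_eq_norm]
    exact (Metric.dist_le_diam_of_mem hBdd hz hfnx).trans (by simp [hD])
  have hiter := ehA_iter hOpen hBdd hMaps hHol hε hth n x hxM v
  have hup : ehA M x v ≤ 3 * ‖v‖ / (ε/2) := ehA_le (by positivity) hball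
  have : ‖fderiv ℂ (f^[n]) x v‖ / D ≤ r ^ n * (3 * ‖v‖ / (ε/2)) :=
    hlow.trans (hiter.trans (mul_le_mul_of_nonneg_left hup (by positivity)))
  rw [div_le_iff₀ hDpos] at this
  calc ‖fderiv ℂ (f^[n]) x v‖ ≤ r ^ n * (3 * ‖v‖ / (ε/2)) * D := this
    _ = 6 * D / ε * r ^ n * ‖v‖ := by field_simp; ring

/-- The half-thickening of the image is preconnected. -/
lemma eh_U_preconnected (hConn : IsConnected M)
    {f : EuclideanSpace ℂ (Fin N) → EuclideanSpace ℂ (Fin N)}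
    (hHol : DifferentiableOn ℂ f M) {δ : ℝ} (hδ : 0 < δ) :
    IsPreconnected (Metric.thickening δ (f '' M)) := by
  set A : Set (EuclideanSpace ℂ (Fin N)) := f '' M with hA
  have hApre : IsPreconnected A :=
    (hConn.image f hHol.continuousOn).isPreconnected
  have hAne : A.Nonempty := hConn.nonempty.image f
  obtain ⟨a₀, ha₀⟩ := hAne
  have hEq : Metric.thickening δ A = ⋃ y : A, (ball (y : EuclideanSpace ℂ (Fin N)) δ ∪ A) := by
    ext x
    simp only [Set.mem_iUnion, Metric.mem_thickening_iff, Set.mem_union, mem_ball]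
    constructor
    · rintro ⟨z, hz, hd⟩
      exact ⟨⟨z, hz⟩, Or.inl hd⟩
    · rintro ⟨⟨z, hz⟩, h | h⟩
      · exact ⟨z, hz, h⟩
      · exact ⟨x, h, by simpa using hδ⟩
  rw [hEq]
  apply isPreconnected_iUnion
  · exact ⟨a₀, Set.mem_iInter.2 fun y => Or.inr ha₀⟩
  · rintro ⟨y, hy⟩
    exact IsPreconnected.union y (mem_ball_self hδ) hy
      (convex_ball y δ).isPreconnected hApre

/-- Uniform geometric distance decay of iterates on the half-thickening. -/
lemma eh_key (hOpen : IsOpen M) (hConn : IsConnected M) (hBdd : Bornology.IsBounded M)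
    {f : EuclideanSpace ℂ (Fin N) → EuclideanSpace ℂ (Fin N)}
    (hMaps : Set.MapsTo f M M) (hHol : DifferentiableOn ℂ f M)
    {ε : ℝ} (hε : 0 < ε) (hth : Metric.thickening ε (f '' M) ⊆ M)
    {a b : EuclideanSpace ℂ (Fin N)}
    (ha : a ∈ Metric.thickening (ε/2) (f '' M)) (hb : b ∈ Metric.thickening (ε/2) (f '' M)) :
    ∃ C, 0 ≤ C ∧ ∀ n, dist (f^[n] a) (f^[n] b) ≤
      C * ((1 + ε / (2 * (Metric.diam M + 1)))⁻¹) ^ n := by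
  have hdiamnn : 0 ≤ Metric.diam M := Metric.diam_nonneg
  set D : ℝ := Metric.diam M + 1 with hD
  have hDpos : 0 < D := by positivity
  set r : ℝ := (1 + ε / (2 * D))⁻¹ with hr
  have hrpos : 0 < r := by rw [hr]; positivity
  set K : ℝ := 6 * D / ε with hK
  have hKpos : 0 < K := by positivity
  set U : Set (EuclideanSpace ℂ (Fin N)) := Metric.thickening (ε/2) (f '' M) with hU
  have hUopen : IsOpen U := Metric.isOpen_thickening
  have hUM : U ⊆ M := (Metric.thickening_mono (by linarith) _).trans hth
  -- local Lipschitz estimate on balls inside U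
  have hlip : ∀ ρ > (0:ℝ), ∀ y, ball y ρ ⊆ U → ∀ p ∈ ball y ρ, ∀ q ∈ ball y ρ, ∀ n,
      dist (f^[n] p) (f^[n] q) ≤ K * r ^ n * dist p q := by
    intro ρ hρ y hbU p hp q hq n
    have hdiff : ∀ z ∈ ball y ρ, DifferentiableAt ℂ (f^[n]) z :=
      fun z hz => eh_iter_diff hOpen hMaps hHol n z (hUM (hbU hz))
    have hbound : ∀ z ∈ ball y ρ, ‖fderiv ℂ (f^[n]) z‖ ≤ K * r ^ n :=
      fun z hz => eh_deriv_bound hOpen hBdd hMaps hHol hε hth z (hbU hz) n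
    have := (convex_ball y ρ).norm_image_sub_le_of_norm_fderiv_le hdiff hbound hq hp
    rwa [dist_eq_norm, dist_eq_norm]
  -- the set of points with geometric decay relative to a
  set S : Set (EuclideanSpace ℂ (Fin N)) :=
    {y | y ∈ U ∧ ∃ C, 0 ≤ C ∧ ∀ n, dist (f^[n] a) (f^[n] y) ≤ C * r ^ n} with hS
  have haS : a ∈ S := ⟨ha, 0, le_refl 0, fun n => by simp⟩
  -- S is open
  have hSopen : IsOpen S := by
    rw [Metric.isOpen_iff]
    rintro y ⟨hyU, C, hC0, hC⟩
    obtain ⟨ρ, hρ, hball⟩ := Metric.isOpen_iff.1 hUopen y hyU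
    refine ⟨ρ, hρ, ?_⟩
    intro y' hy'
    refine ⟨hball hy', C + K * ρ, by positivity, fun n => ?_⟩
    calc dist (f^[n] a) (f^[n] y') ≤ dist (f^[n] a) (f^[n] y) + dist (f^[n] y) (f^[n] y') :=
          dist_triangle _ _ _
      _ ≤ C * r ^ n + K * r ^ n * dist y y' := by
          gcongr
          · exact hC n
          · exact hlip ρ hρ y hball y (mem_ball_self hρ) y' hy' n
      _ ≤ C * r ^ n + K * r ^ n * ρ := by
          have : dist y y' ≤ ρ := by
            rw [dist_comm]; exact (mem_ball.1 hy').le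
          gcongr
      _ = (C + K * ρ) * r ^ n := by ring
  -- the complement within U is open
  set T : Set (EuclideanSpace ℂ (Fin N)) := {y | y ∈ U ∧ y ∉ S} with hT
  have hTopen : IsOpen T := by
    rw [Metric.isOpen_iff]
    rintro y ⟨hyU, hyS⟩
    obtain ⟨ρ, hρ, hball⟩ := Metric.isOpen_iff.1 hUopen y hyU
    refine ⟨ρ, hρ, ?_⟩
    intro y' hy'
    refine ⟨hball hy', fun hy'S => hyS ?_⟩
    obtain ⟨_, C, hC0, hC⟩ := hy'S
    refine ⟨hyU, C + K * ρ, by positivity, fun n => ?_⟩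
    calc dist (f^[n] a) (f^[n] y) ≤ dist (f^[n] a) (f^[n] y') + dist (f^[n] y') (f^[n] y) :=
          dist_triangle _ _ _
      _ ≤ C * r ^ n + K * r ^ n * dist y' y := by
          gcongr
          · exact hC n
          · exact hlip ρ hρ y hball y' hy' y (mem_ball_self hρ) n
      _ ≤ C * r ^ n + K * r ^ n * ρ := by
          have : dist y' y ≤ ρ := (mem_ball.1 hy').le
          gcongr
      _ = (C + K * ρ) * r ^ n := by ring
  -- connectedness forces b ∈ S
  have hpre : IsPreconnected U := eh_U_preconnected hConn hHol (by positivity)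
  by_contra hcon
  push_neg at hcon
  have hbT : b ∈ T := by
    refine ⟨hb, fun hbS => ?_⟩
    obtain ⟨_, C, hC0, hC⟩ := hbS
    obtain ⟨n, hn⟩ := hcon C hC0
    exact absurd (hC n) (not_le.2 hn)
  have hcover : U ⊆ S ∪ T := fun y hy => by
    by_cases h : y ∈ S
    · exact Or.inl h
    · exact Or.inr ⟨hy, h⟩
  obtain ⟨z, hzU, hzS, hzT⟩ := hpre S T hSopen hTopen hcover ⟨a, ha, haS⟩ ⟨b, hb, hbT⟩
  exact hzT.2 hzS

/-- Under the Earle–Hamilton hypotheses, every iterate f^m (m ≥ 1) has a unique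
fixed point in M, which coincides with the unique fixed point of f, and hence
the set of periods of periodic points of f is exactly {1}. -/
theorem stmt_2 (N : ℕ) (M : Set (EuclideanSpace ℂ (Fin N)))
    (hOpen : IsOpen M) (hConn : IsConnected M) (hBdd : Bornology.IsBounded M)
    (f : EuclideanSpace ℂ (Fin N) → EuclideanSpace ℂ (Fin N))
    (hMaps : Set.MapsTo f M M) (hHol : DifferentiableOn ℂ f M)
    (hStrict : ∃ ε > (0 : ℝ), Metric.thickening ε (f '' M) ⊆ M) :
    ∃ x₀ ∈ M, f x₀ = x₀ ∧
      (∀ m : ℕ, 1 ≤ m → ∀ x ∈ M, (f^[m] x = x ↔ x = x₀)) ∧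
      {m : ℕ | 1 ≤ m ∧ ∃ x ∈ M, f^[m] x = x ∧
        ∀ k : ℕ, 1 ≤ k → k < m → f^[k] x ≠ x} = {1} := by
  obtain ⟨ε, hε, hth⟩ := hStrict
  have hdiamnn : 0 ≤ Metric.diam M := Metric.diam_nonneg
  set D : ℝ := Metric.diam M + 1 with hD
  have hDpos : 0 < D := by positivity
  set r : ℝ := (1 + ε / (2 * D))⁻¹ with hr
  have hrpos : 0 < r := by rw [hr]; positivity
  have hrlt : r < 1 := by
    rw [hr]
    rw [inv_lt_one_iff₀]
    right
    have : 0 < ε / (2 * D) := by positivity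
    linarith
  set U : Set (EuclideanSpace ℂ (Fin N)) := Metric.thickening (ε/2) (f '' M) with hU
  have hUM : U ⊆ M := (Metric.thickening_mono (by linarith) _).trans hth
  have hfU : ∀ x ∈ M, f x ∈ U :=
    fun x hx => Metric.self_subset_thickening (by positivity) _ ⟨x, hx, rfl⟩
  obtain ⟨x, hx⟩ := hConn.nonempty
  set a := f x with ha
  have haU : a ∈ U := hfU x hx
  have haM : a ∈ M := hUM haU
  have hbU : f a ∈ U := hfU a haM
  obtain ⟨C, hC0, hC⟩ := eh_key hOpen hConn hBdd hMaps hHol hε hth haU hbU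
  have hdist : ∀ n, dist (f^[n] a) (f^[n+1] a) ≤ C * r ^ n := by
    intro n
    rw [Function.iterate_succ_apply]
    exact hC n
  have hcauchy : CauchySeq (fun n => f^[n] a) := cauchySeq_of_le_geometric r C hrlt hdist
  obtain ⟨x₀, hx₀lim⟩ := cauchySeq_tendsto_of_complete hcauchy
  have hmemA : ∀ n, f^[n] a ∈ f '' M := by
    intro n
    have : f^[n] a = f (f^[n] x) := by
      rw [ha, ← Function.iterate_succ_apply, Function.iterate_succ_apply']
    rw [this]
    exact ⟨f^[n] x, hMaps.iterate n hx, rfl⟩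
  have hx₀U : x₀ ∈ U :=
    Metric.closure_subset_thickening (by positivity) _
      (mem_closure_of_tendsto hx₀lim (Filter.Eventually.of_forall hmemA))
  have hx₀M : x₀ ∈ M := hUM hx₀U
  have hfx₀ : f x₀ = x₀ := by
    have hcont : ContinuousAt f x₀ :=
      (hHol.differentiableAt (hOpen.mem_nhds hx₀M)).continuousAt
    have h1 : Filter.Tendsto (fun n => f (f^[n] a)) Filter.atTop (nhds (f x₀)) :=
      hcont.tendsto.comp hx₀lim
    have h2 : Filter.Tendsto (fun n => f (f^[n] a)) Filter.atTop (nhds x₀) := by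
      have heq : (fun n => f (f^[n] a)) = fun n => f^[n+1] a :=
        funext fun n => (Function.iterate_succ_apply' f n a).symm
      rw [heq]
      exact hx₀lim.comp (Filter.tendsto_add_atTop_nat 1)
    exact tendsto_nhds_unique h1 h2
  have hfixx₀ : ∀ j, f^[j] x₀ = x₀ := fun j => Function.iterate_fixed hfx₀ j
  have huniq : ∀ y ∈ M, ∀ m : ℕ, 1 ≤ m → f^[m] y = y → y = x₀ := by
    intro y hy m hm hfix
    have hyU : y ∈ U := by
      have hrw : y = f (f^[m-1] y) := by
        have h1 : f^[(m-1)+1] y = f (f^[m-1] y) := Function.iterate_succ_apply' f (m-1) y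
        rw [show m - 1 + 1 = m from by omega] at h1
        rw [← h1, hfix]
      rw [hrw]
      exact hfU _ (hMaps.iterate _ hy)
    obtain ⟨C', hC'0, hC'⟩ := eh_key hOpen hConn hBdd hMaps hHol hε hth hyU hx₀U
    have hfixk : ∀ k, f^[m*k] y = y := by
      intro k
      rw [Function.iterate_mul]
      exact Function.iterate_fixed hfix k
    have hd : ∀ k, dist y x₀ ≤ C' * (r ^ m) ^ k := by
      intro k
      calc dist y x₀ = dist (f^[m*k] y) (f^[m*k] x₀) := by rw [hfixk k, hfixx₀ (m*k)]
        _ ≤ C' * r ^ (m*k) := hC' (m*k)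
        _ = C' * (r ^ m) ^ k := by rw [pow_mul]
    have hlim : Filter.Tendsto (fun k => C' * (r ^ m) ^ k) Filter.atTop (nhds 0) := by
      have h1 : Filter.Tendsto (fun k => (r ^ m) ^ k) Filter.atTop (nhds 0) := by
        apply tendsto_pow_atTop_nhds_zero_of_lt_one (by positivity)
        exact pow_lt_one₀ hrpos.le hrlt (by omega)
      simpa using h1.const_mul C'
    have : dist y x₀ ≤ 0 := ge_of_tendsto' hlim hd
    exact dist_le_zero.1 this
  refine ⟨x₀, hx₀M, hfx₀, ?_, ?_⟩
  · intro m hm y hy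
    constructor
    · exact huniq y hy m hm
    · rintro rfl
      exact hfixx₀ m
  · ext m
    simp only [Set.mem_setOf_eq, Set.mem_singleton_iff]
    constructor
    · rintro ⟨hm, y, hyM, hfix, hmin⟩
      by_contra hne
      have hm2 : 2 ≤ m := by omega
      have hy0 : y = x₀ := huniq y hyM m hm hfix
      have : f^[1] y = y := by
        rw [hy0]
        simpa using hfx₀
      exact hmin 1 (le_refl 1) (by omega) this
    · rintro rfl
      exact ⟨le_refl 1, x₀, hx₀M, by simpa using hfx₀, fun k hk1 hk2 _ => by omega⟩
end EH
end

section
/- Let λ₁, …, λₙ be complex numbers ordered so that |λ₁| ≥ |λⱼ| for all 1 ≤ j ≤ n, and suppose |λ₁| > 1. Then there exists a positive integer m such that Re(λ₁^m + ⋯ + λₙ^m) > 1; in particular 1 − (λ₁^m + ⋯ + λₙ^m) has negative real part. -/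
open Real

lemma re_pow_eq (z : ℂ) (m : ℕ) : (z^m).re = ‖z‖^m * Real.cos (m * z.arg) := by
  conv_lhs => rw [← Complex.norm_mul_exp_arg_mul_I z]
  rw [mul_pow, ← Complex.exp_nat_mul, ← Complex.ofReal_pow,
    show ((m:ℂ) * ((z.arg:ℂ) * Complex.I)) = ((m * z.arg : ℝ):ℂ) * Complex.I by push_cast; ring,
    Complex.exp_mul_I, ← Complex.ofReal_cos, ← Complex.ofReal_sin]
  simp only [Complex.mul_re, Complex.add_re, Complex.add_im, Complex.ofReal_re,
    Complex.ofReal_im, Complex.mul_im, Complex.I_re, Complex.I_im]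
  ring

/-- simultaneous Dirichlet: for x : Fin n → ℝ there is d ≥ 1 with each d * x j within 1/6
of an integer. -/
lemma simul_dirichlet (n : ℕ) (x : Fin n → ℝ) :
    ∃ d : ℕ, 0 < d ∧ ∀ j, ∃ P : ℤ, |d * x j - P| < 1/6 := by
  have hfm : ∀ (k : ℕ) (j : Fin n), (⌊Int.fract (k * x j) * 6⌋).toNat < 6 := by
    intro k j
    have h0 : (0:ℝ) ≤ Int.fract (k * x j) := Int.fract_nonneg _
    have h1 : Int.fract (k * x j) < 1 := Int.fract_lt_one _
    have : ⌊Int.fract (k * x j) * 6⌋ < 6 := by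
      apply Int.floor_lt.mpr; push_cast; nlinarith
    omega
  set f : ℕ → (Fin n → Fin 6) := fun k j => ⟨(⌊Int.fract (k * x j) * 6⌋).toNat, hfm k j⟩ with hf
  obtain ⟨a, ha, b, hb, hab, hfab⟩ :=
    Finset.exists_ne_map_eq_of_card_lt_of_maps_to (s := Finset.range (6^n + 1))
      (t := (Finset.univ : Finset (Fin n → Fin 6)))
      (by simp [Finset.card_univ]) (fun a _ => Finset.mem_univ (f a))
  wlog hlt : a < b generalizing a b
  · exact this b hb a ha hab.symm hfab.symm (by omega)
  refine ⟨b - a, by omega, fun j => ?_⟩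
  refine ⟨⌊(b:ℝ) * x j⌋ - ⌊(a:ℝ) * x j⌋, ?_⟩
  have hfloor : ⌊Int.fract ((b:ℝ) * x j) * 6⌋ = ⌊Int.fract ((a:ℝ) * x j) * 6⌋ := by
    have := congrFun hfab j
    simp only [hf, Fin.mk.injEq] at this
    have h0a : 0 ≤ ⌊Int.fract ((a:ℝ) * x j) * 6⌋ :=
      Int.floor_nonneg.mpr (mul_nonneg (Int.fract_nonneg _) (by norm_num))
    have h0b : 0 ≤ ⌊Int.fract ((b:ℝ) * x j) * 6⌋ :=
      Int.floor_nonneg.mpr (mul_nonneg (Int.fract_nonneg _) (by norm_num))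
    omega
  have habs : |Int.fract ((b:ℝ) * x j) * 6 - Int.fract ((a:ℝ) * x j) * 6| < 1 :=
    Int.abs_sub_lt_one_of_floor_eq_floor hfloor
  have hfr : ∀ c : ℕ, (c:ℝ) * x j = Int.fract ((c:ℝ) * x j) + ⌊(c:ℝ) * x j⌋ := by
    intro c; rw [Int.fract]; ring
  have hsub : ((b - a : ℕ) : ℝ) * x j - ((⌊(b:ℝ) * x j⌋ - ⌊(a:ℝ) * x j⌋ : ℤ) : ℝ)
      = Int.fract ((b:ℝ) * x j) - Int.fract ((a:ℝ) * x j) := by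
    have hcast : ((b - a : ℕ) : ℝ) = (b:ℝ) - a := by
      push_cast [Nat.cast_sub hlt.le]; ring
    rw [hcast]; push_cast
    have h1 := hfr a; have h2 := hfr b
    linarith [h1, h2, sub_mul (b:ℝ) (a:ℝ) (x j)]
  rw [hsub]
  rw [abs_lt] at habs ⊢
  constructor <;> nlinarith [habs.1, habs.2]


/-- If λ₁, …, λₙ are complex numbers with |λ₁| ≥ |λⱼ| for all j and |λ₁| > 1,
then there is a positive integer m with Re(λ₁^m + ⋯ + λₙ^m) > 1; in particular
1 − (λ₁^m + ⋯ + λₙ^m) has negative real part. -/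
theorem stmt_4 (n : ℕ) (hn : 0 < n) (lam : Fin n → ℂ)
    (hmax : ∀ j, ‖lam j‖ ≤ ‖lam ⟨0, hn⟩‖)
    (hbig : 1 < ‖lam ⟨0, hn⟩‖) :
    ∃ m : ℕ, 0 < m ∧ 1 < (∑ j, (lam j) ^ m).re ∧
      ((1 : ℂ) - ∑ j, (lam j) ^ m).re < 0 := by
  set r := ‖lam ⟨0, hn⟩‖ with hr
  obtain ⟨M, hM⟩ := pow_unbounded_of_one_lt (2:ℝ) hbig
  have hM1 : 0 < M := by
    rcases Nat.eq_zero_or_pos M with h | h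
    · rw [h, pow_zero] at hM; linarith
    · exact h
  set x : Fin n → ℝ := fun j => (M * (lam j).arg) / (2 * π) with hx
  obtain ⟨d, hd, hP⟩ := simul_dirichlet n x
  have key : 1 < (∑ j, (lam j) ^ (d * M)).re := by
    have hcos : ∀ j, (1:ℝ)/2 ≤ Real.cos ((d * M : ℕ) * (lam j).arg) := by
      intro j
      obtain ⟨P, hPj⟩ := hP j
      have hpi : (0:ℝ) < π := Real.pi_pos
      have hangle : ((d * M : ℕ) : ℝ) * (lam j).arg
          = 2 * π * ((d:ℝ) * x j - P) + P * (2 * π) := by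
        push_cast
        field_simp [hx]
        simp only [hx]; field_simp; ring
      rw [hangle, Real.cos_add_int_mul_two_pi]
      set y := 2 * π * ((d:ℝ) * x j - P)
      have hy : |y| ≤ π / 3 := by
        have : |y| = 2 * π * |(d:ℝ) * x j - P| := by
          rw [abs_mul, abs_of_nonneg (by positivity : (0:ℝ) ≤ 2 * π)]
        rw [this]
        nlinarith [abs_nonneg ((d:ℝ) * x j - P), hPj]
      calc (1:ℝ)/2 = Real.cos (π/3) := Real.cos_pi_div_three.symm
        _ ≤ Real.cos |y| := Real.cos_le_cos_of_nonneg_of_le_pi (abs_nonneg y)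
            (by linarith) hy
        _ = Real.cos y := Real.cos_abs y
    have hrearr : (∑ j, (lam j) ^ (d * M)).re = ∑ j, ((lam j) ^ (d * M)).re := by
      simp [Complex.re_sum]
    rw [hrearr]
    have hterm : ∀ j, (0:ℝ) ≤ ((lam j) ^ (d * M)).re := by
      intro j
      rw [re_pow_eq]
      have := hcos j
      have habs : (0:ℝ) ≤ ‖lam j‖ ^ (d*M) := by positivity
      nlinarith
    have h0 : (2:ℝ) < ((lam ⟨0, hn⟩) ^ (d * M)).re * 2 := by
      rw [re_pow_eq]
      have hc := hcos ⟨0, hn⟩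
      have hrm : (2:ℝ) < r ^ (d * M) := by
        calc (2:ℝ) < r ^ M := hM
          _ ≤ r ^ (d * M) := pow_le_pow_right₀ (by linarith) (Nat.le_mul_of_pos_left M hd)
      nlinarith [pow_pos (by linarith : (0:ℝ) < r) (d*M)]
    have hsum : ((lam ⟨0, hn⟩) ^ (d * M)).re ≤ ∑ j, ((lam j) ^ (d * M)).re :=
      Finset.single_le_sum (fun j _ => hterm j) (Finset.mem_univ _)
    linarith
  exact ⟨d * M, by positivity, key, by simp only [Complex.sub_re, Complex.one_re]; linarith⟩
end

section
/- Let λ₁, …, λₙ be complex numbers with 0 < |λ₁| < 1 and |λⱼ| ≤ |λ₁| for all 1 ≤ j ≤ n. Then there exists a positive integer m such that the complex number λ₁^m + ⋯ + λₙ^m is not an integer (i.e. it is not the image of any integer under the canonical embedding ℤ → ℂ); indeed one can choose m so that |λ₁^m + ⋯ + λₙ^m| < 1 and Re(λ₁^m + ⋯ + λₙ^m) ≠ 0. -/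
/-- If λ₁, …, λₙ are complex numbers with 0 < |λ₁| < 1 and |λⱼ| ≤ |λ₁| for all
j, then there is a positive integer m with |λ₁^m + ⋯ + λₙ^m| < 1 and
Re(λ₁^m + ⋯ + λₙ^m) ≠ 0; in particular λ₁^m + ⋯ + λₙ^m is not an integer. -/
theorem stmt_5 (n : ℕ) (hn : 0 < n) (lam : Fin n → ℂ)
    (hpos : 0 < ‖lam ⟨0, hn⟩‖)
    (hlt : ‖lam ⟨0, hn⟩‖ < 1)
    (hmax : ∀ j, ‖lam j‖ ≤ ‖lam ⟨0, hn⟩‖) :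
    ∃ m : ℕ, 0 < m ∧ ‖∑ j, (lam j) ^ m‖ < 1 ∧
      (∑ j, (lam j) ^ m).re ≠ 0 ∧
      ¬ ∃ k : ℤ, (∑ j, (lam j) ^ m) = (k : ℂ) := by
  classical
  set r := ‖lam ⟨0, hn⟩‖ with hr
  have hr0 : 0 ≤ r := hpos.le
  obtain ⟨M0, hM0⟩ := exists_pow_lt_of_lt_one (show (0:ℝ) < 1/(n+1) by positivity) hlt
  set M := max M0 1 with hMdef
  have hM1 : 1 ≤ M := le_max_right _ _
  have habs : ∀ m, M ≤ m → ‖∑ j, lam j ^ m‖ < 1 := by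
    intro m hm
    have h1 : ‖∑ j, lam j ^ m‖ ≤ ∑ _j : Fin n, r ^ m := by
      refine (norm_sum_le _ _).trans (Finset.sum_le_sum fun j _ => ?_)
      rw [norm_pow]
      exact pow_le_pow_left₀ (norm_nonneg _) (hmax j) m
    have h2 : (∑ _j : Fin n, r ^ m) = n * r ^ m := by
      simp [Finset.sum_const, nsmul_eq_mul]
    have h3 : r ^ m ≤ r ^ M0 :=
      pow_le_pow_of_le_one hr0 hlt.le (le_trans (le_max_left _ _) hm)
    have h4 : (n : ℝ) * r ^ m < n * (1/(n+1)) := by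
      have hn' : (0:ℝ) < n := by exact_mod_cast hn
      exact mul_lt_mul_of_pos_left (lt_of_le_of_lt h3 hM0) hn'
    have h5 : (n : ℝ) * (1/(n+1)) < 1 := by
      rw [mul_one_div, div_lt_one (by positivity)]
      linarith
    calc ‖∑ j, lam j ^ m‖ ≤ (n : ℝ) * r ^ m := h2 ▸ h1
      _ < 1 := h4.trans h5
  have hre : ∃ m, M ≤ m ∧ (∑ j, lam j ^ m).re ≠ 0 := by
    by_contra hcon
    push_neg at hcon
    set ν : Fin n ⊕ Fin n → ℂ :=
      Sum.elim lam (fun j => (starRingEnd ℂ) (lam j)) with hν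
    have hsum : ∀ m : ℕ, ∑ i : Fin n ⊕ Fin n, ν i ^ (M + m) = 0 := by
      intro m
      have hconj : ∑ j, (starRingEnd ℂ) (lam j) ^ (M + m)
          = (starRingEnd ℂ) (∑ j, lam j ^ (M + m)) := by
        rw [map_sum]
        simp [map_pow]
      rw [Fintype.sum_sum_type]
      simp only [hν, Sum.elim_inl, Sum.elim_inr]
      rw [hconj, Complex.add_conj, hcon (M + m) (Nat.le_add_right _ _)]
      simp
    set T : Finset ℂ := Finset.univ.image ν with hT
    have hgroup : ∀ m : ℕ,
        ∑ μ ∈ T, ((Finset.univ.filter fun i => ν i = μ).card : ℂ) * μ ^ (M + m) = 0 := by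
      intro m
      have h := Finset.sum_comp (s := (Finset.univ : Finset (Fin n ⊕ Fin n))) (fun μ : ℂ => μ ^ (M + m)) ν
      rw [← hsum m, h]
      exact Finset.sum_congr rfl fun μ _ => by rw [nsmul_eq_mul]
    have li : LinearIndependent ℂ (fun μ : ℂ => ⇑(powersHom ℂ μ)) :=
      (linearIndependent_monoidHom (Multiplicative ℕ) ℂ).comp
        (fun μ => powersHom ℂ μ) (powersHom ℂ).injective
    have hzero := linearIndependent_iff'.mp li T
      (fun μ => ((Finset.univ.filter fun i => ν i = μ).card : ℂ) * μ ^ M) ?_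
    · have hmem : lam ⟨0, hn⟩ ∈ T :=
        Finset.mem_image.mpr ⟨Sum.inl ⟨0, hn⟩, Finset.mem_univ _, rfl⟩
      have h0 := hzero _ hmem
      have hne : lam ⟨0, hn⟩ ≠ 0 := by
        intro h
        rw [hr, h] at hpos
        simp at hpos
      rcases mul_eq_zero.mp h0 with h | h
      · have hcard : Sum.inl (⟨0, hn⟩ : Fin n) ∈
            (Finset.univ.filter fun i => ν i = lam ⟨0, hn⟩) := by
          simp [hν]
        exact (Nat.cast_ne_zero.mpr (Finset.card_ne_zero_of_mem hcard)) h
      · exact hne ((pow_eq_zero_iff (Nat.one_le_iff_ne_zero.mp hM1)).mp h)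
    · funext m
      simp only [Finset.sum_apply, Pi.smul_apply, smul_eq_mul, powersHom_apply,
        Pi.zero_apply]
      rw [← hgroup (Multiplicative.toAdd m)]
      exact Finset.sum_congr rfl fun μ _ => by rw [pow_add]; ring
  obtain ⟨m, hm, hrem⟩ := hre
  refine ⟨m, lt_of_lt_of_le hM1 hm, habs m hm, hrem, ?_⟩
  rintro ⟨k, hk⟩
  have hk0 : k ≠ 0 := by
    intro h
    apply hrem
    rw [hk, h]
    simp
  have h1 : ‖((k : ℂ))‖ < 1 := hk ▸ habs m hm
  rw [Complex.norm_intCast] at h1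
  have h2 : (1:ℝ) ≤ |(k : ℝ)| := by
    rw [← Int.cast_abs]
    exact_mod_cast Int.one_le_abs hk0
  linarith
end

section
/- Let A be an n × n matrix with integer entries all of whose complex eigenvalues have modulus strictly less than 1. Then every eigenvalue of A is 0; equivalently, the characteristic polynomial of A is xⁿ and A is nilpotent. -/
open Polynomial


lemma mprod_lt_one (s : Multiset ℝ) (hne : s ≠ 0) (h : ∀ x ∈ s, 0 ≤ x ∧ x < 1) :
    s.prod < 1 := by
  induction s using Multiset.induction with
  | empty => exact absurd rfl hne
  | cons a t ih =>
    rw [Multiset.prod_cons]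
    obtain ⟨ha0, ha1⟩ := h a (Multiset.mem_cons_self a t)
    rcases eq_or_ne t 0 with rfl | ht
    · simpa using ha1
    · have ht1 := ih ht (fun x hx => h x (Multiset.mem_cons_of_mem hx))
      have ht0 : 0 ≤ t.prod := Multiset.prod_nonneg fun x hx => (h x (Multiset.mem_cons_of_mem hx)).1
      nlinarith

/-- Kronecker-style: monic integer polynomial with all complex roots of modulus < 1
has only the root 0. -/
lemma key (N : ℕ) : ∀ p : ℤ[X], p.natDegree ≤ N → p.Monic →
    (∀ z : ℂ, (p.map (Int.castRingHom ℂ)).IsRoot z → ‖z‖ < 1) →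
    ∀ z : ℂ, (p.map (Int.castRingHom ℂ)).IsRoot z → z = 0 := by
  induction N with
  | zero =>
    intro p hd hm hroots z hz
    have : p.natDegree = 0 := Nat.le_zero.mp hd
    have hp1 : p = 1 := hm.natDegree_eq_zero.mp this
    simp [hp1] at hz
  | succ N ih =>
    intro p hd hm hroots z hz
    -- p has nonzero degree since it has a root
    have hq : (p.map (Int.castRingHom ℂ)).Monic := hm.map _
    have hq0 : (p.map (Int.castRingHom ℂ)) ≠ 0 := hq.ne_zero
    set q := p.map (Int.castRingHom ℂ) with hqdef
    have hdq : q.natDegree = p.natDegree := p.natDegree_map_eq_of_injective (RingHom.injective_int _)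
    have hdpos : 0 < p.natDegree := by
      by_contra hc
      push_neg at hc
      have : p.natDegree = 0 := Nat.le_zero.mp hc
      have hp1 : p = 1 := hm.natDegree_eq_zero.mp this
      simp [hqdef, hp1] at hz
    -- constant coefficient is zero
    have hsplit := (IsAlgClosed.splits q).eq_prod_roots_of_monic hq
    have hcard : Multiset.card q.roots = q.natDegree :=
      (Polynomial.splits_iff_card_roots).mp (IsAlgClosed.splits q)
    have hrootsne : q.roots ≠ 0 := by
      intro hh
      rw [hh] at hcard
      simp at hcard
      omega
    have heval : q.eval 0 = ((q.roots.map (fun a => -a)).prod) := by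
      conv_lhs => rw [hsplit]
      rw [Polynomial.eval_multiset_prod, Multiset.map_map]
      congr 1
      apply Multiset.map_congr rfl
      intro x hx
      simp
    have habs : ‖q.eval 0‖ < 1 := by
      rw [heval, ← normHom_apply, map_multiset_prod, Multiset.map_map]
      apply mprod_lt_one
      · simpa using hrootsne
      · intro x hx
        simp only [Multiset.mem_map] at hx
        obtain ⟨r, hr, rfl⟩ := hx
        have := hroots r (Polynomial.isRoot_of_mem_roots hr)
        refine ⟨by simp [apply_nonneg], by simpa using this⟩
    have hc0 : p.coeff 0 = 0 := by
      have : q.eval 0 = ((p.coeff 0 : ℤ) : ℂ) := by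
        rw [hqdef]
        simp [Polynomial.eval_map, Polynomial.eval₂_at_zero]
      rw [this, Complex.norm_intCast] at habs
      rw [← Int.cast_abs] at habs
      have h1 : |p.coeff 0| < 1 := by exact_mod_cast habs
      have := abs_lt.mp h1
      omega
    obtain ⟨r, hr⟩ : (X : ℤ[X]) ∣ p := Polynomial.X_dvd_iff.mpr hc0
    have hrm : r.Monic := by
      have : (X * r).Monic := hr ▸ hm
      exact Polynomial.Monic.of_mul_monic_left (Polynomial.monic_X) this
    have hrd : r.natDegree ≤ N := by
      have : p.natDegree = 1 + r.natDegree := by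
        rw [hr, Polynomial.natDegree_mul Polynomial.X_ne_zero hrm.ne_zero, natDegree_X]
      omega
    have hmap : q = X * r.map (Int.castRingHom ℂ) := by
      rw [hqdef, hr, Polynomial.map_mul, Polynomial.map_X]
    rw [hmap] at hz
    simp only [IsRoot, eval_mul, eval_X, mul_eq_zero] at hz
    rcases hz with rfl | hz2
    · rfl
    · exact ih r hrd hrm (fun w hw => hroots w (by rw [← hqdef] at *; rw [hmap]; simp [IsRoot, hw.eq_zero])) z hz2


/-- An integer matrix all of whose complex eigenvalues have modulus < 1 has all
eigenvalues 0: its characteristic polynomial is Xⁿ and it is nilpotent. -/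
theorem stmt_6 (n : ℕ) (A : Matrix (Fin n) (Fin n) ℤ)
    (h : ∀ z : ℂ, ((A.map (Int.cast : ℤ → ℂ)).charpoly).IsRoot z →
      ‖z‖ < 1) :
    (∀ z : ℂ, ((A.map (Int.cast : ℤ → ℂ)).charpoly).IsRoot z → z = 0) ∧
      A.charpoly = Polynomial.X ^ n ∧ IsNilpotent A := by
  have hmap : (A.map (Int.cast : ℤ → ℂ)).charpoly = A.charpoly.map (Int.castRingHom ℂ) :=
    Matrix.charpoly_map A (Int.castRingHom ℂ)
  have hm := A.charpoly_monic
  have hz0 : ∀ z : ℂ, ((A.map (Int.cast : ℤ → ℂ)).charpoly).IsRoot z → z = 0 := by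
    intro z hz
    exact key A.charpoly.natDegree A.charpoly le_rfl hm
      (fun w hw => h w (by rwa [hmap])) z (by rwa [← hmap])
  have hdeg : A.charpoly.natDegree = n := by
    simpa using A.charpoly_natDegree_eq_dim
  have hX : A.charpoly = X ^ n := by
    apply Polynomial.map_injective (Int.castRingHom ℂ) Int.cast_injective
    rw [Polynomial.map_pow, Polynomial.map_X]
    set q := A.charpoly.map (Int.castRingHom ℂ) with hq
    have hqm : q.Monic := hm.map _
    have hsplit := (IsAlgClosed.splits q).eq_prod_roots_of_monic hqm
    have hcard : Multiset.card q.roots = q.natDegree :=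
      (Polynomial.splits_iff_card_roots).mp (IsAlgClosed.splits q)
    have hdq : q.natDegree = n := by
      rw [hq, A.charpoly.natDegree_map_eq_of_injective (RingHom.injective_int _), hdeg]
    rw [hsplit]
    have : Multiset.map (fun a => X - C a) q.roots = Multiset.map (fun _ => (X : ℂ[X])) q.roots := by
      apply Multiset.map_congr rfl
      intro x hx
      have : x = 0 := hz0 x (by rw [hmap]; exact Polynomial.isRoot_of_mem_roots hx)
      simp [this]
    rw [this, Multiset.map_const', Multiset.prod_replicate, hcard, hdq]
  refine ⟨hz0, hX, ⟨n, ?_⟩⟩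
  have := A.aeval_self_charpoly
  rw [hX] at this
  simpa using this
end

section
/- Let k ≥ 2 and let λ₁, …, λₙ be complex numbers with |λ₁| = ⋯ = |λ_k| = 1 and |λⱼ| < 1 for k < j ≤ n. Then there exists a positive integer m such that Re(λ₁^m + ⋯ + λₙ^m) > 1; in particular 1 − (λ₁^m + ⋯ + λₙ^m) has negative real part. -/
open Complex Finset

/-- If `|z| = 1` then `|z^t - 1| ≤ t * |z - 1|`. -/
lemma abs_pow_sub_one_le (z : ℂ) (hz : ‖z‖ = 1) (t : ℕ) :
    ‖z ^ t - 1‖ ≤ t * ‖z - 1‖ := by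
  induction t with
  | zero => simp
  | succ t ih =>
    have hsplit : z ^ (t + 1) - 1 = z ^ t * (z - 1) + (z ^ t - 1) := by ring
    rw [hsplit]
    calc ‖z ^ t * (z - 1) + (z ^ t - 1)‖
        ≤ ‖z ^ t * (z - 1)‖ + ‖z ^ t - 1‖ :=
          norm_add_le _ _
      _ ≤ ‖z - 1‖ + t * ‖z - 1‖ := by
          rw [norm_mul, norm_pow, hz, one_pow, one_mul]
          exact add_le_add_right ih _
      _ = (↑(t + 1) : ℝ) * ‖z - 1‖ := by push_cast; ring

/-- Simultaneous recurrence: powers of unimodular numbers return near 1. -/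
lemma exists_pow_close (k : ℕ) (μ : Fin k → ℂ) (hμ : ∀ j, ‖μ j‖ = 1)
    (δ : ℝ) (hδ : 0 < δ) :
    ∃ m : ℕ, 0 < m ∧ ∀ j, ‖μ j ^ m - 1‖ < δ := by
  set v : ℕ → (Fin k → ℂ) := fun m j => μ j ^ m with hv
  have hmem : ∀ m, v m ∈ Metric.closedBall (0 : Fin k → ℂ) 1 := by
    intro m
    rw [Metric.mem_closedBall, dist_zero_right]
    refine (pi_norm_le_iff_of_nonneg zero_le_one).mpr fun j => ?_
    rw [norm_pow, hμ, one_pow]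
  obtain ⟨x, -, φ, hφ, hconv⟩ :=
    (isCompact_closedBall (0 : Fin k → ℂ) 1).tendsto_subseq hmem
  rw [Metric.tendsto_atTop] at hconv
  obtain ⟨N, hN⟩ := hconv (δ / 2) (half_pos hδ)
  have hab : φ N < φ (N + 1) := hφ (by omega)
  refine ⟨φ (N + 1) - φ N, by omega, fun j => ?_⟩
  have h1 : dist (v (φ N)) x < δ / 2 := hN N le_rfl
  have h2 : dist (v (φ (N + 1))) x < δ / 2 := hN (N + 1) (by omega)
  have hd : dist (v (φ (N + 1))) (v (φ N)) < δ :=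
    (dist_triangle_right _ _ x).trans_lt (by linarith)
  have hdj : dist (v (φ (N + 1)) j) (v (φ N) j) < δ :=
    (dist_le_pi_dist (v (φ (N + 1))) (v (φ N)) j).trans_lt hd
  have hexp : φ N + (φ (N + 1) - φ N) = φ (N + 1) := by omega
  have key : μ j ^ (φ (N + 1)) - μ j ^ (φ N)
      = μ j ^ (φ N) * (μ j ^ (φ (N + 1) - φ N) - 1) := by
    rw [mul_sub, mul_one, ← pow_add, hexp]
  have : ‖μ j ^ (φ (N + 1)) - μ j ^ (φ N)‖
      = ‖μ j ^ (φ (N + 1) - φ N) - 1‖ := by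
    rw [key, norm_mul, norm_pow, hμ, one_pow, one_mul]
  calc ‖μ j ^ (φ (N + 1) - φ N) - 1‖
      = ‖μ j ^ (φ (N + 1)) - μ j ^ (φ N)‖ := this.symm
    _ = dist (v (φ (N + 1)) j) (v (φ N) j) := by rw [Complex.dist_eq]
    _ < δ := hdj

/-- Let k ≥ 2 and λ₁, …, λₙ be complex numbers with |λⱼ| = 1 for j ≤ k and
|λⱼ| < 1 for j > k. Then there is a positive integer m with
Re(λ₁^m + ⋯ + λₙ^m) > 1; in particular 1 − (λ₁^m + ⋯ + λₙ^m) has negative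
real part. -/
theorem stmt_7 (n k : ℕ) (hk : 2 ≤ k) (hkn : k ≤ n) (lam : Fin n → ℂ)
    (h1 : ∀ j : Fin n, (j : ℕ) < k → ‖lam j‖ = 1)
    (h2 : ∀ j : Fin n, k ≤ (j : ℕ) → ‖lam j‖ < 1) :
    ∃ m : ℕ, 0 < m ∧ 1 < (∑ j, (lam j) ^ m).re ∧
      ((1 : ℂ) - ∑ j, (lam j) ^ m).re < 0 := by
  have hc : (0 : ℝ) < 1 / (2 * (n + 1)) := by positivity
  -- choose t large so tail terms are small
  have htail : ∀ j : Fin n, ∀ᶠ t : ℕ in Filter.atTop,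
      k ≤ (j : ℕ) → ‖lam j‖ ^ t < 1 / (2 * (n + 1)) := by
    intro j
    by_cases hj : k ≤ (j : ℕ)
    · have h0 : |‖lam j‖| < 1 := by
        rw [_root_.abs_of_nonneg (norm_nonneg _)]; exact h2 j hj
      have htd := tendsto_pow_atTop_nhds_zero_of_abs_lt_one h0
      filter_upwards [htd.eventually (gt_mem_nhds hc)] with t ht _
      exact ht
    · exact Filter.Eventually.of_forall fun t h => absurd h hj
  obtain ⟨t, ht⟩ := ((Filter.eventually_all.mpr htail).and
    (Filter.eventually_ge_atTop 1)).exists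
  obtain ⟨htail', ht1⟩ := ht
  have htpos : (0 : ℝ) < t := by exact_mod_cast ht1
  have hkpos : (0 : ℝ) < k := by positivity
  have hδ : (0 : ℝ) < 1 / (4 * k * t) := by positivity
  set μ : Fin k → ℂ := fun j => lam (Fin.castLE hkn j) with hμdef
  have hμ : ∀ j, ‖μ j‖ = 1 := fun j => h1 _ j.2
  obtain ⟨m₀, hm₀, hclose⟩ := exists_pow_close k μ hμ _ hδ
  refine ⟨t * m₀, by positivity, ?_⟩
  have htm : t ≤ t * m₀ := Nat.le_mul_of_pos_right t hm₀
  -- lower bound for the "unit circle" terms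
  have hhead : ∀ j : Fin n, (j : ℕ) < k → 1 - 1 / (4 * k) ≤ ((lam j) ^ (t * m₀)).re := by
    intro j hjk
    have hj' : μ ⟨(j : ℕ), hjk⟩ = lam j := by
      simp [hμdef]
    have h1' : ‖(lam j) ^ (t * m₀) - 1‖ < 1 / (4 * k) := by
      have := abs_pow_sub_one_le ((lam j) ^ m₀) (by
        rw [norm_pow, h1 j hjk, one_pow]) t
      rw [← pow_mul, mul_comm m₀ t] at this
      have hcl := hclose ⟨(j : ℕ), hjk⟩
      rw [hj'] at hcl
      calc ‖(lam j) ^ (t * m₀) - 1‖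
          ≤ t * ‖(lam j) ^ m₀ - 1‖ := this
        _ < t * (1 / (4 * k * t)) := by
            exact mul_lt_mul_of_pos_left hcl htpos
        _ = 1 / (4 * k) := by field_simp
    have hre : 1 - ((lam j) ^ (t * m₀)).re ≤ ‖(lam j) ^ (t * m₀) - 1‖ := by
      have := Complex.re_le_norm (1 - (lam j) ^ (t * m₀))
      rw [Complex.sub_re, Complex.one_re] at this
      rwa [← norm_neg, neg_sub] at this
    linarith
  -- lower bound for the tail terms
  have htailre : ∀ j : Fin n, k ≤ (j : ℕ) →
      -(1 / (2 * (n + 1))) ≤ ((lam j) ^ (t * m₀)).re := by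
    intro j hj
    have habs : ‖(lam j) ^ (t * m₀)‖ < 1 / (2 * (n + 1)) := by
      rw [norm_pow]
      calc ‖lam j‖ ^ (t * m₀)
          ≤ ‖lam j‖ ^ t :=
            pow_le_pow_of_le_one (norm_nonneg _) (h2 j hj).le htm
        _ < 1 / (2 * (n + 1)) := htail' j hj
    have := Complex.abs_re_le_norm ((lam j) ^ (t * m₀))
    have h' := neg_abs_le (((lam j) ^ (t * m₀)).re)
    linarith [abs_le.mp (this.trans habs.le) |>.1]
  -- sum up
  have hsum : (∑ j, (lam j) ^ (t * m₀)).re = ∑ j, ((lam j) ^ (t * m₀)).re := by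
    simp [Complex.re_sum]
  have hlow : ∀ j : Fin n,
      (if (j : ℕ) < k then (1 - 1 / (4 * k) : ℝ) else -(1 / (2 * (n + 1))))
        ≤ ((lam j) ^ (t * m₀)).re := by
    intro j
    by_cases hjk : (j : ℕ) < k
    · simpa [hjk] using hhead j hjk
    · simpa [hjk] using htailre j (le_of_not_gt hjk)
  have hsumlow := Finset.sum_le_sum (fun j (_ : j ∈ Finset.univ) => hlow j)
  have hcard : (Finset.univ.filter (fun j : Fin n => (j : ℕ) < k)).card = k := by
    rcases eq_or_lt_of_le hkn with rfl | h
    · rw [Finset.filter_true_of_mem (fun j _ => j.2)]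
      simp
    · have : (Finset.univ.filter (fun j : Fin n => (j : ℕ) < k))
          = Finset.Iio (⟨k, h⟩ : Fin n) := by
        ext j
        simp [Fin.lt_def]
      rw [this, Fin.card_Iio]
  have hcard2 : (Finset.univ.filter (fun j : Fin n => ¬ (j : ℕ) < k)).card = n - k := by
    have := Finset.card_filter_add_card_filter_not
      (s := (Finset.univ : Finset (Fin n))) (p := fun j : Fin n => (j : ℕ) < k)
    simp only [Finset.card_univ, Fintype.card_fin] at this
    omega
  have hsumval : ∑ j : Fin n,
      (if (j : ℕ) < k then (1 - 1 / (4 * k) : ℝ) else -(1 / (2 * (n + 1))))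
      = k * (1 - 1 / (4 * k)) + (n - k : ℕ) * (-(1 / (2 * (n + 1)))) := by
    rw [Finset.sum_ite, Finset.sum_const, Finset.sum_const, hcard, hcard2]
    simp [nsmul_eq_mul]
  have hnk : ((n - k : ℕ) : ℝ) = (n : ℝ) - k := by
    rw [Nat.cast_sub hkn]
  have hgt : (1 : ℝ) < ∑ j, ((lam j) ^ (t * m₀)).re := by
    rw [hsumval, hnk] at hsumlow
    have hk2 : (2 : ℝ) ≤ k := by exact_mod_cast hk
    have hnk' : (k : ℝ) ≤ n := by exact_mod_cast hkn
    have e1 : (k : ℝ) * (1 - 1 / (4 * k)) = k - 1 / 4 := by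
      field_simp
    have e2 : ((n : ℝ) - k) * (1 / (2 * (n + 1))) ≤ 1 / 2 := by
      rw [mul_one_div, div_le_div_iff₀ (by positivity) (by norm_num : (0:ℝ) < 2)]
      nlinarith
    nlinarith [hsumlow]
  refine ⟨by rwa [hsum], ?_⟩
  rw [Complex.sub_re, Complex.one_re]
  rw [hsum]
  linarith
end

section
/- Let A be an n × n matrix with integer entries such that trace(A^m) ≤ 1 for every integer m ≥ 1. Then exactly one of the following holds: (i) all complex eigenvalues of A are 0 (so the characteristic polynomial of A is xⁿ); (ii) the complex eigenvalues of A are 1 with multiplicity one and 0 with multiplicity n − 1 (characteristic polynomial x^{n−1}(x − 1)); (iii) the complex eigenvalues of A are −1 with multiplicity one and 0 with multiplicity n − 1 (characteristic polynomial x^{n−1}(x + 1)). -/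
open Polynomial

/-! ### Auxiliary lemmas -/

/-- The complex absolute value, as a bundled absolute value (removed from Mathlib). -/
noncomputable def Complex.abs : AbsoluteValue ℂ ℝ :=
  IsAbsoluteValue.toAbsoluteValue (norm : ℂ → ℝ)

@[simp] lemma Complex.abs_apply' (z : ℂ) : Complex.abs z = ‖z‖ := rfl

lemma Complex.abs_ofReal (x : ℝ) : Complex.abs (x : ℂ) = |x| := by simp

lemma Complex.abs_intCast (x : ℤ) : Complex.abs (x : ℂ) = |(x : ℝ)| := by
  simp [Complex.norm_intCast]

lemma Complex.abs_re_le_abs (z : ℂ) : |z.re| ≤ Complex.abs z := Complex.abs_re_le_norm z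

lemma Complex.abs_im_le_abs (z : ℂ) : |z.im| ≤ Complex.abs z := Complex.abs_im_le_norm z

lemma Complex.abs_le_abs_re_add_abs_im (z : ℂ) : Complex.abs z ≤ |z.re| + |z.im| :=
  Complex.norm_le_abs_re_add_abs_im z

private lemma lemB {R' : Type*} [CommRing R'] [Algebra ℂ R'] (m : ℕ) (hm : 0 < m) (a b : R') :
    ∏ ζ ∈ nthRootsFinset m (1 : ℂ), (a - algebraMap ℂ R' ζ * b) = a ^ m - b ^ m := by
  have key : (∏ ζ ∈ nthRootsFinset m (1 : ℂ),
      (MvPolynomial.X 0 - MvPolynomial.C ζ * MvPolynomial.X 1) :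
        MvPolynomial (Fin 2) ℂ) = MvPolynomial.X 0 ^ m - MvPolynomial.X 1 ^ m := by
    apply MvPolynomial.funext
    intro x
    simp only [map_prod, map_sub, map_pow, map_mul, MvPolynomial.eval_X, MvPolynomial.eval_C]
    exact (IsPrimitiveRoot.pow_sub_pow_eq_prod_sub_mul (x 0) (x 1) hm
      (Complex.isPrimitiveRoot_exp m hm.ne')).symm
  have := congrArg (MvPolynomial.aeval (R := ℂ) (S₁ := R') ![a, b]) key
  simpa [map_prod, MvPolynomial.algebraMap_eq] using this

private lemma factors_commute {k m : ℕ} (M : Matrix (Fin k) (Fin k) ℂ[X]) :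
    (↑(nthRootsFinset m (1 : ℂ)) : Set ℂ).Pairwise
      (Function.onFun Commute fun ζ => M - Matrix.scalar (Fin k) (C ζ * X)) := by
  intro a _ b _ _
  have ha := Matrix.scalar_commute (n := Fin k) (C a * X) (fun r => Commute.all _ r)
  have hb := Matrix.scalar_commute (n := Fin k) (C b * X) (fun r => Commute.all _ r)
  exact ((Commute.refl M).sub_right (hb M).symm).sub_left
    ((ha M).sub_right (ha _))

private lemma matId {k m : ℕ} (hm : 0 < m) (M : Matrix (Fin k) (Fin k) ℂ[X]) :
    (nthRootsFinset m (1 : ℂ)).noncommProd (fun ζ => M - Matrix.scalar (Fin k) (C ζ * X))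
      (factors_commute M) = M ^ m - Matrix.scalar (Fin k) (X ^ m) := by
  let S := Matrix (Fin k) (Fin k) ℂ[X]
  let ρ : ℂ[X][X] →+* S :=
    eval₂RingHom' (algebraMap ℂ[X] S) M (fun p => (Algebra.commutes p M))
  have hρC : ∀ p : ℂ[X], ρ (C p) = Matrix.scalar (Fin k) p := by
    intro p
    show eval₂ _ _ _ = _
    rw [eval₂_C, Matrix.algebraMap_eq_diagonal]
    rfl
  have hρX : ρ (X : ℂ[X][X]) = M := by
    show eval₂ _ _ _ = _
    rw [eval₂_X]
  have key := lemB (R' := ℂ[X][X]) m hm (X : ℂ[X][X]) (C (X : ℂ[X]))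
  rw [← Finset.noncommProd_eq_prod] at key
  have h2 := congrArg ρ key
  erw [Finset.map_noncommProd (g := ρ)] at h2
  rw [map_sub, map_pow, map_pow, hρX, hρC] at h2
  rw [map_pow (Matrix.scalar (Fin k)) X m, ← h2]
  apply Finset.noncommProd_congr rfl
  intro ζ hζ
  rw [map_sub, hρX, show (algebraMap ℂ ℂ[X][X]) ζ = C (C ζ) from rfl,
    map_mul ρ (C (C ζ)) (C X), hρC, hρC, ← map_mul]

private lemma det_scalar_sub {k : ℕ} (B : Matrix (Fin k) (Fin k) ℂ) (p : ℂ[X]) :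
    (Matrix.scalar (Fin k) p - B.map C).det = B.charpoly.comp p := by
  have h1 : (B.charmatrix).map (eval₂RingHom C p) = Matrix.scalar (Fin k) p - B.map C := by
    rw [Matrix.charmatrix]
    ext i j
    rcases eq_or_ne i j with rfl | hij
    · simp [Matrix.scalar_apply, Matrix.diagonal_apply_eq, Matrix.map_apply]
    · simp [Matrix.scalar_apply, Matrix.diagonal_apply_ne _ hij, Matrix.map_apply, hij]
  rw [← h1, ← RingHom.mapMatrix_apply, ← RingHom.map_det]
  rfl

private lemma swap_prod {α β γ : Type*} [CommMonoid γ] (s : Finset α) (Λ : Multiset β)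
    (g : α → β → γ) :
    ∏ a ∈ s, (Λ.map (g a)).prod = (Λ.map fun b => ∏ a ∈ s, g a b).prod := by
  induction Λ using Multiset.induction_on with
  | empty => simp
  | cons x Λ ih => simp [Multiset.map_cons, Multiset.prod_cons, Finset.prod_mul_distrib, ih]

private lemma comp_pow_inj {m : ℕ} (hm : 0 < m) {p q : ℂ[X]}
    (h : p.comp (X ^ m) = q.comp (X ^ m)) : p = q := by
  apply Polynomial.funext
  intro r
  obtain ⟨z, hz⟩ := IsAlgClosed.exists_pow_nat_eq r hm
  have := congrArg (eval z) h
  rwa [eval_comp, eval_comp, eval_pow, eval_X, hz] at this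

/-- The characteristic polynomial of `B ^ m` over `ℂ` has roots the `m`-th powers of
the roots of the characteristic polynomial of `B`. -/
private lemma charpoly_pow {k m : ℕ} (hm : 0 < m) (B : Matrix (Fin k) (Fin k) ℂ) :
    (B ^ m).charpoly = ((B.charpoly.roots.map (· ^ m)).map (fun r => X - C r)).prod := by
  have hsplit : B.charpoly = (B.charpoly.roots.map fun a => X - C a).prod :=
    (IsAlgClosed.splits _).eq_prod_roots_of_monic B.charpoly_monic
  have hcard : Multiset.card B.charpoly.roots = k := by
    rw [Polynomial.splits_iff_card_roots.mp (IsAlgClosed.splits _),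
      Matrix.charpoly_natDegree_eq_dim, Fintype.card_fin]
  have hm' : (nthRootsFinset m (1 : ℂ)).card = m :=
    (Complex.isPrimitiveRoot_exp m hm.ne').card_nthRootsFinset
  have hdet := congrArg Matrix.det (matId hm (B.map C))
  rw [show Matrix.det = ⇑(Matrix.detMonoidHom (n := Fin k) (R := ℂ[X])) from rfl] at hdet
  rw [Finset.map_noncommProd (g := Matrix.detMonoidHom (n := Fin k) (R := ℂ[X])),
    Finset.noncommProd_eq_prod] at hdet
  simp only [Matrix.coe_detMonoidHom] at hdet
  have hfac : ∀ ζ : ℂ, (B.map C - Matrix.scalar (Fin k) (C ζ * X)).det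
      = (-1) ^ k * B.charpoly.comp (C ζ * X) := by
    intro ζ
    rw [show B.map C - Matrix.scalar (Fin k) (C ζ * X)
        = -(Matrix.scalar (Fin k) (C ζ * X) - B.map C) from (neg_sub _ _).symm, Matrix.det_neg,
      det_scalar_sub, Fintype.card_fin]
  have hpow : (B.map C) ^ m = (B ^ m).map C := by
    have := map_pow (RingHom.mapMatrix (C : ℂ →+* ℂ[X]) (m := Fin k)) B m
    simpa [RingHom.mapMatrix_apply] using this.symm
  have hrhs : ((B.map C) ^ m - Matrix.scalar (Fin k) (X ^ m)).det
      = (-1) ^ k * (B ^ m).charpoly.comp (X ^ m) := by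
    rw [hpow, show (B ^ m).map C - Matrix.scalar (Fin k) (X ^ m)
        = -(Matrix.scalar (Fin k) (X ^ m) - (B ^ m).map C) from (neg_sub _ _).symm,
      Matrix.det_neg, det_scalar_sub, Fintype.card_fin]
  rw [hrhs] at hdet
  rw [Finset.prod_congr rfl (fun ζ _ => hfac ζ)] at hdet
  rw [Finset.prod_mul_distrib, Finset.prod_const, hm'] at hdet
  have hcomp : ∀ ζ : ℂ, B.charpoly.comp (C ζ * X)
      = (B.charpoly.roots.map fun lam => C ζ * X - C lam).prod := by
    intro ζ
    conv_lhs => rw [hsplit]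
    change (eval₂RingHom C (C ζ * X)) (Multiset.map (fun a => X - C a) B.charpoly.roots).prod = _
    rw [map_multiset_prod, Multiset.map_map]
    congr 1
    apply Multiset.map_congr rfl
    intro lam _
    simp
  rw [Finset.prod_congr rfl (fun ζ _ => hcomp ζ), swap_prod] at hdet
  have inner : ∀ lam : ℂ, (∏ ζ ∈ nthRootsFinset m (1 : ℂ), (C ζ * X - C lam))
      = (-1 : ℂ[X]) ^ m * ((-1) * (X ^ m - C (lam ^ m))) := by
    intro lam
    have h1 : ∀ ζ : ℂ, (C ζ * X - C lam : ℂ[X]) = (-1) * (C lam - algebraMap ℂ ℂ[X] ζ * X) := by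
      intro ζ; rw [Polynomial.algebraMap_eq]; ring
    rw [Finset.prod_congr rfl (fun ζ _ => h1 ζ), Finset.prod_mul_distrib, Finset.prod_const,
      lemB m hm (C lam) X, hm', ← C_pow]
    ring
  rw [Multiset.map_congr rfl (fun lam _ => inner lam)] at hdet
  have expand : (Multiset.map (fun lam => (-1 : ℂ[X]) ^ m * ((-1) * (X ^ m - C (lam ^ m))))
      B.charpoly.roots).prod
      = ((-1 : ℂ[X]) ^ m) ^ k * ((-1) ^ k *
        (Multiset.map (fun lam => (X ^ m - C (lam ^ m))) B.charpoly.roots).prod) := by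
    rw [Multiset.prod_map_mul, Multiset.prod_map_mul]
    simp [hcard]
  rw [expand] at hdet
  have hsgn : (((-1 : ℂ[X]) ^ k) ^ m) * (((-1 : ℂ[X]) ^ m) ^ k) = 1 := by
    rw [← pow_mul, ← pow_mul, mul_comm k m, ← pow_add, ← two_mul, pow_mul]
    norm_num
  have hdet2 : ((-1 : ℂ[X]) ^ k) *
      (Multiset.map (fun lam => (X ^ m - C (lam ^ m))) B.charpoly.roots).prod
      = ((-1 : ℂ[X]) ^ k) * ((B ^ m).charpoly.comp (X ^ m)) := by
    calc ((-1 : ℂ[X]) ^ k) *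
        (Multiset.map (fun lam => (X ^ m - C (lam ^ m))) B.charpoly.roots).prod
        = (((-1 : ℂ[X]) ^ k) ^ m) * ((((-1 : ℂ[X]) ^ m) ^ k) * ((-1) ^ k *
            (Multiset.map (fun lam => (X ^ m - C (lam ^ m))) B.charpoly.roots).prod)) := by
          rw [← mul_assoc, hsgn, one_mul]
      _ = ((-1 : ℂ[X]) ^ k) * ((B ^ m).charpoly.comp (X ^ m)) := hdet
  have hPQ := mul_left_cancel₀ (pow_ne_zero k (by norm_num : (-1 : ℂ[X]) ≠ 0)) hdet2
  have hfinal : (Multiset.map (fun lam => (X ^ m - C (lam ^ m))) B.charpoly.roots).prod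
      = (((B.charpoly.roots.map (· ^ m)).map (fun r => X - C r)).prod).comp (X ^ m) := by
    symm
    change (eval₂RingHom C (X ^ m))
      (((B.charpoly.roots.map (· ^ m)).map (fun r => X - C r)).prod) = _
    rw [map_multiset_prod, Multiset.map_map, Multiset.map_map]
    congr 1
    apply Multiset.map_congr rfl
    intro lam _
    show eval₂ C (X ^ m) (X - C (lam ^ m)) = X ^ m - C (lam ^ m)
    rw [eval₂_sub, eval₂_X, eval₂_C]
  rw [hfinal] at hPQ
  exact (comp_pow_inj hm hPQ).symm

private lemma trace_pow_eq_sum {k m : ℕ} (hm : 0 < m) (B : Matrix (Fin k) (Fin k) ℂ) :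
    (B ^ m).trace = (B.charpoly.roots.map (· ^ m)).sum := by
  rw [Matrix.trace_eq_sum_roots_charpoly, charpoly_pow hm, roots_multiset_prod_X_sub_C]

private lemma dirichlet {r : ℕ} (g : Fin r → ℂ) (hg : ∀ i, Complex.abs (g i) = 1)
    (N : ℕ) (hN : 0 < N) :
    ∃ d : ℕ, N ≤ d ∧ ∀ i, Complex.abs (g i ^ d - 1) ≤ 1/4 := by
  classical
  set F : ℕ → (Fin r → ℤ × ℤ) :=
    fun t i => (⌊(g i ^ (t * N)).re * 8⌋, ⌊(g i ^ (t * N)).im * 8⌋) with hF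
  have habs : ∀ i (k : ℕ), Complex.abs (g i ^ k) = 1 := by
    intro i k; rw [map_pow, hg i, one_pow]
  have hbox : ∀ x : ℝ, |x| ≤ 1 → ⌊x * 8⌋ ∈ Set.Icc (-8 : ℤ) 8 := by
    intro x hx
    constructor
    · exact Int.le_floor.mpr (by push_cast; nlinarith [abs_le.mp hx])
    · have h9 : ⌊x * 8⌋ < 9 := Int.floor_lt.mpr (by push_cast; nlinarith [abs_le.mp hx])
      omega
  have hmaps : Set.MapsTo F Set.univ
      (Set.univ.pi fun _ : Fin r => (Set.Icc (-8 : ℤ) 8) ×ˢ (Set.Icc (-8 : ℤ) 8)) := by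
    intro t _ i _
    refine ⟨hbox _ ?_, hbox _ ?_⟩
    · rw [← habs i (t * N)]; exact Complex.abs_re_le_abs _
    · rw [← habs i (t * N)]; exact Complex.abs_im_le_abs _
  have hfin : (Set.univ.pi fun _ : Fin r => (Set.Icc (-8 : ℤ) 8) ×ˢ (Set.Icc (-8 : ℤ) 8)).Finite :=
    Set.Finite.pi fun _ => (Set.finite_Icc _ _).prod (Set.finite_Icc _ _)
  have main : ∀ t t' : ℕ, t < t' → F t = F t' →
      ∃ d : ℕ, N ≤ d ∧ ∀ i, Complex.abs (g i ^ d - 1) ≤ 1/4 := by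
    intro t t' hlt heq
    refine ⟨(t' - t) * N,
      by nlinarith [Nat.one_le_iff_ne_zero.mpr (Nat.sub_ne_zero_of_lt hlt)], ?_⟩
    intro i
    have hu : g i ^ (t' * N) = g i ^ ((t' - t) * N) * g i ^ (t * N) := by
      rw [← pow_add, ← add_mul, Nat.sub_add_cancel hlt.le]
    have hfl1 : ⌊(g i ^ (t * N)).re * 8⌋ = ⌊(g i ^ (t' * N)).re * 8⌋ := by
      have := congrFun heq i; simp only [hF] at this; exact congrArg Prod.fst this
    have hfl2 : ⌊(g i ^ (t * N)).im * 8⌋ = ⌊(g i ^ (t' * N)).im * 8⌋ := by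
      have := congrFun heq i; simp only [hF] at this; exact congrArg Prod.snd this
    have h1 := Int.abs_sub_lt_one_of_floor_eq_floor hfl1
    have h2 := Int.abs_sub_lt_one_of_floor_eq_floor hfl2
    have hdiff : Complex.abs (g i ^ (t' * N) - g i ^ (t * N)) ≤ 1/4 := by
      have hre : |(g i ^ (t' * N) - g i ^ (t * N)).re| ≤ 1/8 := by
        simp only [Complex.sub_re]
        rw [abs_sub_comm] at h1
        have := abs_le.mp h1.le
        rw [abs_le]
        constructor <;> nlinarith
      have him : |(g i ^ (t' * N) - g i ^ (t * N)).im| ≤ 1/8 := by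
        simp only [Complex.sub_im]
        rw [abs_sub_comm] at h2
        have := abs_le.mp h2.le
        rw [abs_le]
        constructor <;> nlinarith
      calc Complex.abs (g i ^ (t' * N) - g i ^ (t * N))
          ≤ |(g i ^ (t' * N) - g i ^ (t * N)).re| + |(g i ^ (t' * N) - g i ^ (t * N)).im| :=
            Complex.abs_le_abs_re_add_abs_im _
        _ ≤ 1/4 := by linarith
    calc Complex.abs (g i ^ ((t' - t) * N) - 1)
        = Complex.abs ((g i ^ ((t' - t) * N) - 1) * g i ^ (t * N)) := by
          rw [map_mul, habs, mul_one]
      _ = Complex.abs (g i ^ (t' * N) - g i ^ (t * N)) := by rw [sub_mul, ← hu, one_mul]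
      _ ≤ 1/4 := hdiff
  obtain ⟨t, -, t', -, hne, heq⟩ :=
    Set.infinite_univ (α := ℕ) |>.exists_ne_map_eq_of_mapsTo hmaps hfin
  rcases hne.lt_or_gt with hlt | hlt
  · exact main t t' hlt heq
  · exact main t' t hlt heq.symm

private lemma mprod01 (s : Multiset ℝ) (h : ∀ x ∈ s, 0 ≤ x ∧ x ≤ 1) :
    0 ≤ s.prod ∧ s.prod ≤ 1 := by
  induction s using Multiset.induction_on with
  | empty => simp
  | cons x s ih =>
    have hx := h x (Multiset.mem_cons_self x s)
    have hs := ih (fun y hy => h y (Multiset.mem_cons_of_mem hy))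
    rw [Multiset.prod_cons]
    constructor
    · exact mul_nonneg hx.1 hs.1
    · nlinarith [hx.1, hx.2, hs.1, hs.2]

/-- If A is an n × n integer matrix with trace(A^m) ≤ 1 for every m ≥ 1, then
exactly one of the following holds: (i) the characteristic polynomial of A is
Xⁿ (all eigenvalues 0); (ii) it is X^(n−1)·(X − 1) (eigenvalues 1, 0, …, 0);
(iii) it is X^(n−1)·(X + 1) (eigenvalues −1, 0, …, 0). -/
theorem stmt_8 (n : ℕ) (A : Matrix (Fin n) (Fin n) ℤ)
    (h : ∀ m : ℕ, 1 ≤ m → (A ^ m).trace ≤ 1) :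
    (A.charpoly = X ^ n ∧
        A.charpoly ≠ X ^ (n - 1) * (X - 1) ∧
        A.charpoly ≠ X ^ (n - 1) * (X + 1)) ∨
      (A.charpoly ≠ X ^ n ∧
        A.charpoly = X ^ (n - 1) * (X - 1) ∧
        A.charpoly ≠ X ^ (n - 1) * (X + 1)) ∨
      (A.charpoly ≠ X ^ n ∧
        A.charpoly ≠ X ^ (n - 1) * (X - 1) ∧
        A.charpoly = X ^ (n - 1) * (X + 1)) := by
  classical
  have d12 : (X ^ n : ℤ[X]) ≠ X ^ (n-1) * (X - 1) := fun hc => by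
    simpa using congrArg (eval 1) hc
  have d13 : (X ^ n : ℤ[X]) ≠ X ^ (n-1) * (X + 1) := fun hc => by
    simpa using congrArg (eval 1) hc
  have d23 : (X ^ (n-1) * (X - 1) : ℤ[X]) ≠ X ^ (n-1) * (X + 1) := fun hc => by
    simpa using congrArg (eval 1) hc
  suffices hh : A.charpoly = X ^ n ∨ A.charpoly = X ^ (n-1) * (X - 1) ∨
      A.charpoly = X ^ (n-1) * (X + 1) by
    rcases hh with hc | hc | hc
    · exact Or.inl ⟨hc, by rw [hc]; exact d12, by rw [hc]; exact d13⟩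
    · exact Or.inr (Or.inl ⟨by rw [hc]; exact fun e => d12 e.symm, hc,
        by rw [hc]; exact d23⟩)
    · exact Or.inr (Or.inr ⟨by rw [hc]; exact fun e => d13 e.symm,
        by rw [hc]; exact fun e => d23 e.symm, hc⟩)
  -- work over ℂ
  set B : Matrix (Fin n) (Fin n) ℂ := A.map (fun z : ℤ => (z : ℂ)) with hBdef
  have hchar : B.charpoly = (A.charpoly).map (Int.castRingHom ℂ) :=
    Matrix.charpoly_map A (Int.castRingHom ℂ)
  set Λ : Multiset ℂ := B.charpoly.roots with hΛ
  have hcardΛ : Multiset.card Λ = n := by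
    rw [hΛ, Polynomial.splits_iff_card_roots.mp (IsAlgClosed.splits _),
      Matrix.charpoly_natDegree_eq_dim, Fintype.card_fin]
  have hsplit : B.charpoly = (Λ.map fun a => X - C a).prod :=
    (IsAlgClosed.splits _).eq_prod_roots_of_monic B.charpoly_monic
  have htr : ∀ m : ℕ, 0 < m → (Λ.map (· ^ m)).sum = (((A ^ m).trace : ℤ) : ℂ) := by
    intro m hm
    rw [hΛ, ← trace_pow_eq_sum hm]
    have hpow : B ^ m = (A ^ m).map (fun z : ℤ => (z : ℂ)) := by
      have := map_pow (RingHom.mapMatrix (Int.castRingHom ℂ) (m := Fin n)) A m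
      simp only [RingHom.mapMatrix_apply] at this
      exact this.symm
    rw [hpow]
    simp [Matrix.trace, Matrix.map_apply, Matrix.diag]
  have hrebound : ∀ m : ℕ, 0 < m → (Λ.map (fun z => (z ^ m).re)).sum ≤ 1 := by
    intro m hm
    have h2 : ((Λ.map (· ^ m)).sum).re = (Λ.map (fun z => (z ^ m).re)).sum := by
      have := Complex.reAddGroupHom.map_multiset_sum (Λ.map (· ^ m))
      simpa [Multiset.map_map, Function.comp] using this
    rw [← h2, htr m hm]
    have : ((((A ^ m).trace : ℤ) : ℂ)).re = (((A ^ m).trace : ℤ) : ℝ) := by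
      simp
    rw [this]
    exact_mod_cast h m hm
  -- Step 1: all roots have modulus ≤ 1
  have habs_le : ∀ z ∈ Λ, Complex.abs z ≤ 1 := by
    by_contra hcon
    push_neg at hcon
    obtain ⟨z₀, hz₀Λ, hz₀⟩ := hcon
    obtain ⟨l, hl⟩ : ∃ l : List ℂ, (l : Multiset ℂ) = Λ := ⟨Λ.toList, Multiset.coe_toList Λ⟩
    set g : Fin l.length → ℂ :=
      fun i => if l.get i = 0 then 1 else l.get i / Complex.abs (l.get i) with hg
    have hgabs : ∀ i, Complex.abs (g i) = 1 := by
      intro i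
      by_cases hc : l.get i = 0
      · simp only [hg, if_pos hc]
        simp
      · have habsne : (Complex.abs (l.get i) : ℝ) ≠ 0 := by
          simpa using hc
        simp only [hg, if_neg hc]
        rw [map_div₀, Complex.abs_ofReal, abs_of_nonneg (Complex.abs.nonneg _),
          div_self habsne]
    obtain ⟨N, hNlt⟩ := pow_unbounded_of_one_lt (2 : ℝ) hz₀
    have hNpos : 0 < N := by
      rcases Nat.eq_zero_or_pos N with rfl | hp
      · norm_num at hNlt
      · exact hp
    obtain ⟨d, hNd, hd⟩ := dirichlet g hgabs N hNpos
    have hdpos : 0 < d := lt_of_lt_of_le hNpos hNd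
    have hre34 : ∀ i, (3/4 : ℝ) ≤ (g i ^ d).re := by
      intro i
      have h1 := hd i
      have h2 := Complex.abs_re_le_abs (g i ^ d - 1)
      have h3 : (g i ^ d - 1).re = (g i ^ d).re - 1 := by simp
      rw [h3] at h2
      have h4 := abs_le.mp (h2.trans h1)
      linarith
    have hpt : ∀ z ∈ Λ, Complex.abs z ^ d * (3/4 : ℝ) ≤ (z ^ d).re := by
      intro z hzΛ
      rw [← hl] at hzΛ
      obtain ⟨i, hi⟩ := List.mem_iff_get.mp (Multiset.mem_coe.mp hzΛ)
      by_cases hc : z = 0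
      · simp [hc, zero_pow hdpos.ne']
      · have habsne : (Complex.abs z : ℝ) ≠ 0 := by simpa using hc
        have hcne0 : (Complex.abs z : ℂ) ≠ 0 := Complex.ofReal_ne_zero.mpr habsne
        have hz : z = (Complex.abs z : ℂ) * g i := by
          rw [hg]
          simp only [hi, if_neg hc]
          rw [mul_comm]
          exact (div_mul_cancel₀ z hcne0).symm
        have hcalc : (z ^ d).re = Complex.abs z ^ d * (g i ^ d).re := by
          conv_lhs => rw [hz]
          rw [mul_pow, ← Complex.ofReal_pow, Complex.re_ofReal_mul]
        rw [hcalc]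
        have := hre34 i
        have hnn : (0:ℝ) ≤ Complex.abs z ^ d := pow_nonneg (Complex.abs.nonneg z) d
        nlinarith
    obtain ⟨t, ht'⟩ := Multiset.exists_cons_of_mem hz₀Λ
    have h0 : (0:ℝ) ≤ (t.map (fun z => (z ^ d).re)).sum := by
      apply Multiset.sum_nonneg
      intro x hx
      obtain ⟨z, hz, rfl⟩ := Multiset.mem_map.mp hx
      have hle := hpt z (by rw [ht']; exact Multiset.mem_cons_of_mem hz)
      nlinarith [pow_nonneg (Complex.abs.nonneg z) d]
    have hz₀le := hpt z₀ hz₀Λ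
    have hsum_ge : Complex.abs z₀ ^ d * (3/4 : ℝ) ≤ (Λ.map (fun z => (z ^ d).re)).sum := by
      rw [ht', Multiset.map_cons, Multiset.sum_cons]
      linarith
    have hRN : (2:ℝ) < Complex.abs z₀ ^ d :=
      lt_of_lt_of_le hNlt (pow_le_pow_right₀ hz₀.le hNd)
    have := hrebound d hdpos
    linarith
  -- Step 2: split off the zero roots
  set Λ1 := Λ.filter (fun z => ¬ z = 0) with hΛ1def
  set Λ0 := Λ.filter (fun z => z = 0) with hΛ0def
  have hsplitΛ : Λ0 + Λ1 = Λ := Multiset.filter_add_not _ _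
  set j := Multiset.card Λ0 with hj
  have hcards : j + Multiset.card Λ1 = n := by
    rw [hj, ← hcardΛ, ← hsplitΛ, Multiset.card_add]
  have hQ : B.charpoly = X ^ j * (Λ1.map (fun a => X - C a)).prod := by
    rw [hsplit, ← hsplitΛ, Multiset.map_add, Multiset.prod_add]
    congr 1
    have he : Λ0.map (fun a => X - C a) = Λ0.map (fun _ => (X : ℂ[X])) :=
      Multiset.map_congr rfl (fun z hz => by
        rw [(Multiset.mem_filter.mp hz).2]; simp)
    rw [he, Multiset.map_const', Multiset.prod_replicate]
  have hcoeffj : B.charpoly.coeff j = (-1) ^ (Multiset.card Λ1) * Λ1.prod := by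
    have h0 := Polynomial.coeff_X_pow_mul ((Λ1.map (fun a => X - C a)).prod) j 0
    rw [zero_add] at h0
    rw [hQ, h0, Polynomial.coeff_zero_eq_eval_zero]
    have : eval 0 (Λ1.map (fun a => X - C a)).prod
        = ((Λ1.map (fun a => X - C a)).map (eval 0)).prod := by
      exact map_multiset_prod (evalRingHom (0:ℂ)) _
    rw [this, Multiset.map_map]
    have he : Λ1.map ((eval 0) ∘ (fun a => X - C a)) = Λ1.map Neg.neg :=
      Multiset.map_congr rfl (fun z hz => by simp)
    rw [he, Multiset.prod_map_neg]
  have hint : B.charpoly.coeff j = ((A.charpoly.coeff j : ℤ) : ℂ) := by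
    rw [hchar, Polynomial.coeff_map]
    rfl
  set c := A.charpoly.coeff j with hcdef
  have hprod_ne : Λ1.prod ≠ 0 := by
    apply Multiset.prod_ne_zero
    intro h0
    exact (Multiset.mem_filter.mp h0).2 rfl
  have hcne : c ≠ 0 := by
    intro h0
    have h1 : ((-1 : ℂ)) ^ (Multiset.card Λ1) * Λ1.prod = 0 := by
      rw [← hcoeffj, hint, h0]
      simp
    rcases mul_eq_zero.mp h1 with h2 | h2
    · exact pow_ne_zero _ (by norm_num) h2
    · exact hprod_ne h2
  have habs_eq : (Λ1.map Complex.abs).prod = Complex.abs ((c : ℂ)) := by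
    rw [← map_multiset_prod Complex.abs Λ1, ← hint, hcoeffj, map_mul, map_pow]
    simp
  have h1le : (1:ℝ) ≤ Complex.abs ((c : ℂ)) := by
    rw [Complex.abs_intCast]
    exact_mod_cast Int.one_le_abs hcne
  have habs1 : ∀ z ∈ Λ1, Complex.abs z = 1 := by
    intro z hz
    by_contra hne
    have hzΛ : z ∈ Λ := Multiset.mem_of_mem_filter hz
    have hlt : Complex.abs z < 1 := lt_of_le_of_ne (habs_le z hzΛ) hne
    obtain ⟨t, htt⟩ := Multiset.exists_cons_of_mem hz
    have hrest : 0 ≤ (t.map Complex.abs).prod ∧ (t.map Complex.abs).prod ≤ 1 := by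
      apply mprod01
      intro x hx
      obtain ⟨w, hw, rfl⟩ := Multiset.mem_map.mp hx
      have hwΛ1 : w ∈ Λ1 := by rw [htt]; exact Multiset.mem_cons_of_mem hw
      have hwΛ : w ∈ Λ := Multiset.mem_of_mem_filter hwΛ1
      exact ⟨Complex.abs.nonneg w, habs_le w hwΛ⟩
    rw [htt, Multiset.map_cons, Multiset.prod_cons] at habs_eq
    nlinarith [hrest.1, hrest.2, hlt, h1le, Complex.abs.nonneg z]
  -- Step 3: at most one nonzero root
  have hcard1 : Multiset.card Λ1 ≤ 1 := by
    by_contra hc2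
    push_neg at hc2
    obtain ⟨l1, hl1⟩ : ∃ l : List ℂ, (l : Multiset ℂ) = Λ1 := ⟨Λ1.toList, Multiset.coe_toList _⟩
    have hg1 : ∀ i : Fin l1.length, Complex.abs (l1.get i) = 1 := fun i =>
      habs1 _ (by rw [← hl1]; exact Multiset.mem_coe.mpr (l1.get_mem i))
    obtain ⟨d, hd1, hd⟩ := dirichlet (fun i => l1.get i) hg1 1 one_pos
    have hdpos : 0 < d := hd1
    have hs0 : (Λ0.map (fun z => (z ^ d).re)).sum = 0 := by
      have he : Λ0.map (fun z => (z ^ d).re) = Λ0.map (fun _ => (0:ℝ)) :=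
        Multiset.map_congr rfl (fun z hz => by
          rw [(Multiset.mem_filter.mp hz).2, zero_pow hdpos.ne']; simp)
      rw [he, Multiset.map_const', Multiset.sum_replicate]
      simp
    have hs1 : (Multiset.card Λ1 : ℝ) * (3/4 : ℝ) ≤ (Λ1.map (fun z => (z ^ d).re)).sum := by
      have hb : ∀ x ∈ Λ1.map (fun z => (z ^ d).re), (3/4 : ℝ) ≤ x := by
        intro x hx
        obtain ⟨z, hz, rfl⟩ := Multiset.mem_map.mp hx
        rw [← hl1] at hz
        obtain ⟨i, hi⟩ := List.mem_iff_get.mp (Multiset.mem_coe.mp hz)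
        have h1 := hd i
        rw [hi] at h1
        have h2 := Complex.abs_re_le_abs (z ^ d - 1)
        have h3 : (z ^ d - 1).re = (z ^ d).re - 1 := by simp
        rw [h3] at h2
        have h4 := abs_le.mp (h2.trans h1)
        linarith
      have := Multiset.card_nsmul_le_sum hb
      rw [Multiset.card_map] at this
      rw [← nsmul_eq_mul]
      exact this
    have hcard2 : (2:ℝ) ≤ (Multiset.card Λ1 : ℝ) := by exact_mod_cast hc2
    have hS := hrebound d hdpos
    rw [← hsplitΛ, Multiset.map_add, Multiset.sum_add, hs0, zero_add] at hS
    nlinarith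
  -- Step 4: conclude
  rcases Nat.le_one_iff_eq_zero_or_eq_one.mp hcard1 with hc0 | hc1
  · left
    have hΛ1nil : Λ1 = 0 := Multiset.card_eq_zero.mp hc0
    have hjn : j = n := by omega
    have hBX : B.charpoly = X ^ n := by
      rw [hQ, hΛ1nil, hjn]
      simp
    apply Polynomial.map_injective (Int.castRingHom ℂ) Int.cast_injective
    rw [← hchar, hBX, Polynomial.map_pow, Polynomial.map_X]
  · obtain ⟨z, hzeq⟩ := Multiset.card_eq_one.mp hc1
    have hzmem : z ∈ Λ1 := by rw [hzeq]; exact Multiset.mem_singleton_self z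
    have hjn : j = n - 1 := by
      rw [hzeq] at hcards
      simp at hcards
      omega
    have hn1 : 1 ≤ n := by
      rw [hzeq] at hcards
      simp at hcards
      omega
    have hcz : ((c : ℤ) : ℂ) = -z := by
      rw [← hint, hcoeffj, hzeq]
      simp
    have habsz : Complex.abs z = 1 := habs1 z hzmem
    have habsc : |c| = 1 := by
      have h1 : Complex.abs ((c:ℂ)) = 1 := by
        rw [hcz, AbsoluteValue.map_neg]
        exact habsz
      rw [Complex.abs_intCast] at h1
      exact_mod_cast h1
    have hBQ : B.charpoly = X ^ (n-1) * (X - C z) := by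
      rw [hQ, hzeq, hjn]
      simp
    rcases (abs_eq (by norm_num : (0:ℤ) ≤ 1)).mp habsc with hc1' | hc1'
    · -- c = 1, z = -1
      right; right
      have hz1 : z = -1 := by
        rw [hc1'] at hcz
        push_cast at hcz
        linear_combination hcz
      apply Polynomial.map_injective (Int.castRingHom ℂ) Int.cast_injective
      rw [← hchar, hBQ, hz1]
      simp [Polynomial.map_mul, Polynomial.map_pow]
    · -- c = -1, z = 1
      right; left
      have hz1 : z = 1 := by
        rw [hc1'] at hcz
        push_cast at hcz
        linear_combination hcz
      apply Polynomial.map_injective (Int.castRingHom ℂ) Int.cast_injective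
      rw [← hchar, hBQ, hz1]
      simp [Polynomial.map_mul, Polynomial.map_pow]
end

section
/- Let 𝔻 = {z ∈ ℂ : |z| < 1} be the open unit disk and let f : 𝔻 → 𝔻 be holomorphic. Then exactly one of the following holds: (a) there exists an integer p ≥ 1 such that the iterate f^p is the identity map of 𝔻; (b) f has exactly one periodic point, which is a fixed point of f; (c) f has no periodic points. -/
open Metric Set Function Complex

noncomputable def mob (a z : ℂ) : ℂ := (z - a) / (1 - (starRingEnd ℂ) a * z)

lemma mob_den_ne {a z : ℂ} (ha : ‖a‖ < 1) (hz : ‖z‖ < 1) :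
    (1 : ℂ) - (starRingEnd ℂ) a * z ≠ 0 := by
  intro h
  have h1 : ‖(starRingEnd ℂ) a * z‖ < 1 := by
    rw [norm_mul, RCLike.norm_conj]
    nlinarith [norm_nonneg a, norm_nonneg z]
  have h2 : (starRingEnd ℂ) a * z = 1 := by linear_combination -h
  rw [h2, norm_one] at h1
  exact lt_irrefl _ h1

lemma mob_normSq (a z : ℂ) :
    normSq (1 - (starRingEnd ℂ) a * z) - normSq (z - a)
      = (1 - normSq a) * (1 - normSq z) := by
  have h : ∀ w : ℂ, (normSq w : ℂ) = w * (starRingEnd ℂ) w := fun w => (Complex.mul_conj w).symm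
  apply Complex.ofReal_injective
  push_cast
  rw [h, h, h, h]
  simp only [map_sub, map_mul, map_one, Complex.conj_conj]
  ring

lemma mob_mem {a z : ℂ} (ha : ‖a‖ < 1) (hz : ‖z‖ < 1) : ‖mob a z‖ < 1 := by
  have hkey := mob_normSq a z
  have hsq : ∀ w : ℂ, normSq w = ‖w‖ ^ 2 := by
    intro w
    rw [← Complex.sq_norm]
  have hpos : 0 < (1 - normSq a) * (1 - normSq z) := by
    rw [hsq, hsq]
    have h1 : ‖a‖ ^ 2 < 1 := by nlinarith [norm_nonneg a]
    have h2 : ‖z‖ ^ 2 < 1 := by nlinarith [norm_nonneg z]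
    exact mul_pos (by linarith) (by linarith)
  have hlt : normSq (z - a) < normSq (1 - (starRingEnd ℂ) a * z) := by linarith
  rw [hsq, hsq] at hlt
  have hden : ‖(1 : ℂ) - (starRingEnd ℂ) a * z‖ ≠ 0 := norm_ne_zero_iff.2 (mob_den_ne ha hz)
  have hdenpos : 0 < ‖(1 : ℂ) - (starRingEnd ℂ) a * z‖ := lt_of_le_of_ne (norm_nonneg _) (Ne.symm hden)
  have hnum : ‖z - a‖ < ‖(1 : ℂ) - (starRingEnd ℂ) a * z‖ := by
    nlinarith [norm_nonneg (z - a)]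
  rw [mob, norm_div]
  exact (div_lt_one hdenpos).2 hnum

lemma mob_inv {a z : ℂ} (ha : ‖a‖ < 1) (hz : ‖z‖ < 1) : mob (-a) (mob a z) = z := by
  have hd : (1 : ℂ) - (starRingEnd ℂ) a * z ≠ 0 := mob_den_ne ha hz
  have hm : ‖mob a z‖ < 1 := mob_mem ha hz
  have ha' : ‖(-a : ℂ)‖ < 1 := by rwa [norm_neg]
  have hd2 : (1 : ℂ) - (starRingEnd ℂ) (-a) * mob a z ≠ 0 := mob_den_ne ha' hm
  have hd3 : (1 : ℂ) - (starRingEnd ℂ) a * a ≠ 0 := mob_den_ne ha ha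
  simp only [mob, map_neg] at hd2 ⊢
  field_simp at hd2 ⊢
  rw [div_eq_iff (fun h0 => hd2 (by rw [h0, zero_div]))]
  ring

lemma mob_diffOn {a : ℂ} (ha : ‖a‖ < 1) : DifferentiableOn ℂ (mob a) (ball 0 1) := by
  apply DifferentiableOn.div
  · exact (differentiable_id.sub_const a).differentiableOn
  · exact ((differentiable_const (1 : ℂ)).sub
      ((differentiable_const _).mul differentiable_id)).differentiableOn
  · intro z hz
    exact mob_den_ne ha (mem_ball_zero_iff.1 hz)

lemma mob_mapsTo {a : ℂ} (ha : ‖a‖ < 1) :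
    MapsTo (mob a) (ball (0 : ℂ) 1) (ball (0 : ℂ) 1) := fun z hz =>
  mem_ball_zero_iff.2 (mob_mem ha (mem_ball_zero_iff.1 hz))

lemma two_fixed_eq_id {g : ℂ → ℂ}
    (hm : MapsTo g (ball (0 : ℂ) 1) (ball (0 : ℂ) 1))
    (hd : DifferentiableOn ℂ g (ball (0 : ℂ) 1)) {a b : ℂ}
    (haD : a ∈ ball (0 : ℂ) 1) (hbD : b ∈ ball (0 : ℂ) 1)
    (hga : g a = a) (hgb : g b = b) (hab : a ≠ b) :
    ∀ z ∈ ball (0 : ℂ) 1, g z = z := by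
  have ha : ‖a‖ < 1 := mem_ball_zero_iff.1 haD
  have hb : ‖b‖ < 1 := mem_ball_zero_iff.1 hbD
  have ha' : ‖(-a : ℂ)‖ < 1 := by rwa [norm_neg]
  set h : ℂ → ℂ := fun z => mob a (g (mob (-a) z)) with hh
  have hmapsH : MapsTo h (ball (0 : ℂ) 1) (ball (0 : ℂ) 1) :=
    (mob_mapsTo ha).comp (hm.comp (mob_mapsTo ha'))
  have hdH : DifferentiableOn ℂ h (ball (0 : ℂ) 1) :=
    (mob_diffOn ha).comp (hd.comp (mob_diffOn ha') (mob_mapsTo ha'))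
      (hm.comp (mob_mapsTo ha'))
  have hmob0 : mob (-a) 0 = a := by simp [mob]
  have hh0 : h 0 = 0 := by
    rw [hh]
    simp only [hmob0, hga]
    simp [mob]
  set w : ℂ := mob a b with hwdef
  have hwD : w ∈ ball (0 : ℂ) 1 := mem_ball_zero_iff.2 (mob_mem ha hb)
  have hw0 : w ≠ 0 := by
    rw [hwdef, mob]
    intro hcon
    rcases div_eq_zero_iff.1 hcon with h1 | h1
    · exact hab (sub_eq_zero.1 h1).symm
    · exact mob_den_ne ha hb h1
  have hhw : h w = w := by
    rw [hh]
    simp only [hwdef, mob_inv ha hb, hgb]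
  have hds : dslope h 0 w = 1 := by
    rw [dslope_of_ne _ hw0, slope_def_field, hhw, hh0, sub_zero, div_self hw0]
  have h_maps' : MapsTo h (ball (0 : ℂ) 1) (ball (h 0) 1) := by rwa [hh0]
  have heq := Complex.affine_of_mapsTo_ball_of_exists_norm_dslope_eq_div hdH (h_maps'.mono_right ball_subset_closedBall) hwD
    (by rw [hds, norm_one]; norm_num)
  have hid : ∀ z ∈ ball (0 : ℂ) 1, h z = z := by
    intro z hz
    have := heq hz
    simpa [hh0, hds] using this
  intro z hz
  have hzn : ‖z‖ < 1 := mem_ball_zero_iff.1 hz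
  have h1 : h (mob a z) = mob a z := hid _ (mob_mapsTo ha hz)
  have h2 : mob a (g z) = mob a z := by
    rw [hh] at h1
    simpa [mob_inv ha hzn] using h1
  have hgz : ‖g z‖ < 1 := mem_ball_zero_iff.1 (hm hz)
  calc g z = mob (-a) (mob a (g z)) := (mob_inv ha hgz).symm
    _ = mob (-a) (mob a z) := by rw [h2]
    _ = z := mob_inv ha hzn


/-- Pick-type theorem on the unit disk: for a holomorphic self-map f of the
open unit disk 𝔻, exactly one of the following holds: (a) some iterate f^p
(p ≥ 1) is the identity of 𝔻; (b) f has exactly one periodic point, which is a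
fixed point; (c) f has no periodic points. -/
theorem stmt_9 (f : ℂ → ℂ)
    (hMaps : Set.MapsTo f (Metric.ball (0 : ℂ) 1) (Metric.ball (0 : ℂ) 1))
    (hHol : DifferentiableOn ℂ f (Metric.ball (0 : ℂ) 1)) :
    let D := Metric.ball (0 : ℂ) 1
    let Pa := ∃ p : ℕ, 1 ≤ p ∧ ∀ z ∈ D, f^[p] z = z
    let Pb := ∃ z₀ ∈ D, f z₀ = z₀ ∧
      ∀ z ∈ D, (∃ m : ℕ, 1 ≤ m ∧ f^[m] z = z) → z = z₀
    let Pc := ∀ z ∈ D, ¬ ∃ m : ℕ, 1 ≤ m ∧ f^[m] z = z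
    (Pa ∧ ¬Pb ∧ ¬Pc) ∨ (¬Pa ∧ Pb ∧ ¬Pc) ∨ (¬Pa ∧ ¬Pb ∧ Pc) := by
  intro D Pa Pb Pc
  have hIterMaps : ∀ n, MapsTo f^[n] (ball (0 : ℂ) 1) (ball (0 : ℂ) 1) :=
    fun n => hMaps.iterate n
  have hIterDiff : ∀ n, DifferentiableOn ℂ f^[n] (ball (0 : ℂ) 1) := by
    intro n
    induction n with
    | zero => simpa using differentiableOn_id
    | succ n ih =>
      rw [Function.iterate_succ]
      exact ih.comp hHol hMaps
  have h0D : (0 : ℂ) ∈ ball (0 : ℂ) 1 := mem_ball_self one_pos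
  have hhalfD : (1 / 2 : ℂ) ∈ ball (0 : ℂ) 1 := by
    rw [mem_ball_zero_iff]
    simp
    norm_num
  by_cases hPa : ∃ p : ℕ, 1 ≤ p ∧ ∀ z ∈ ball (0 : ℂ) 1, f^[p] z = z
  · left
    obtain ⟨p, hp, hid⟩ := hPa
    refine ⟨⟨p, hp, hid⟩, ?_, ?_⟩
    · rintro ⟨z₀, hz₀D, hz₀f, huniq⟩
      have h0 : (0 : ℂ) = z₀ := huniq 0 h0D ⟨p, hp, hid 0 h0D⟩
      have hh : (1 / 2 : ℂ) = z₀ := huniq _ hhalfD ⟨p, hp, hid _ hhalfD⟩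
      rw [← h0] at hh
      exact (by norm_num : (1 / 2 : ℂ) ≠ 0) hh
    · intro hPc
      exact hPc 0 h0D ⟨p, hp, hid 0 h0D⟩
  · by_cases hPc : ∀ z ∈ ball (0 : ℂ) 1, ¬ ∃ m : ℕ, 1 ≤ m ∧ f^[m] z = z
    · right; right
      refine ⟨hPa, ?_, hPc⟩
      rintro ⟨z₀, hz₀D, hz₀f, -⟩
      exact hPc z₀ hz₀D ⟨1, le_refl 1, by simpa using hz₀f⟩
    · right; left
      refine ⟨hPa, ?_, hPc⟩
      push_neg at hPc
      obtain ⟨z, hzD, m, hm, hzm⟩ := hPc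
      have hfzD : f z ∈ ball (0 : ℂ) 1 := hMaps hzD
      have hfz : f z = z := by
        by_contra hne
        have hfix : f^[m] (f z) = f z := by
          rw [← Function.iterate_succ_apply, Function.iterate_succ_apply', hzm]
        have hid := two_fixed_eq_id (hIterMaps m) (hIterDiff m) hzD hfzD hzm hfix
          (fun h => hne h.symm)
        exact hPa ⟨m, hm, hid⟩
      refine ⟨z, hzD, hfz, ?_⟩
      rintro w hwD ⟨k, hk, hwk⟩
      by_contra hne
      have hzfix : f^[k] z = z := Function.iterate_fixed hfz k
      have hid := two_fixed_eq_id (hIterMaps k) (hIterDiff k) hwD hzD hwk hzfix hne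
      exact hPa ⟨k, hk, hid⟩
end
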